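/- arXiv:1209.3783 — 6 statements merged into one kernel-verified Lean document; each statement's English description precedes it below -/
import Mathlib

section
/- There exist constants δ₀ ∈ (0, arsinh(1)) and c > 0 such that for every ℓ ∈ (0, 2·arsinh(1)), every holomorphic function φ on the strip {w ∈ ℂ : |Re w| < X(ℓ)} with φ(w + 2πi) = φ(w) and Fourier coefficients (b_n)_{n ∈ ℤ}, and every nonzero integer n, one has c·|b_n|²·|n|^{−1}·e^{2|n|X(ℓ)} ≤ 4∫_{{(s,θ) : X_{δ₀}(ℓ) ≤ |s| < X(ℓ), 0 ≤ θ < 2π}} |φ(s+iθ)|² ρ_ℓ(s)^{−2} ds dθ, i.e. the left-hand side is bounded by ‖Φ‖²_{L²(δ₀-thick(C(ℓ)))} for Φ = φ dw². -/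
open Real MeasureTheory Set
open scoped ENNReal NNReal

/-- Half-length of the hyperbolic collar around a geodesic of length `ℓ`. -/
noncomputable def collarX (ℓ : ℝ) : ℝ :=
  (2 * π / ℓ) * (π / 2 - Real.arctan (Real.sinh (ℓ / 2)))

/-- Conformal factor of the collar metric. -/
noncomputable def collarRho (ℓ s : ℝ) : ℝ :=
  ℓ / (2 * π * Real.cos (ℓ * s / (2 * π)))

/-- Half-length of the `δ`-thin part of the collar. -/
noncomputable def collarXdelta (δ ℓ : ℝ) : ℝ :=
  if Real.sinh (ℓ / 2) ≤ Real.sinh δ then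
    (2 * π / ℓ) * (π / 2 - Real.arcsin (Real.sinh (ℓ / 2) / Real.sinh δ))
  else 0


lemma arsinh_one_lt_one : Real.arsinh 1 < 1 := by
  have h : (1:ℝ) < Real.sinh 1 := Real.self_lt_sinh_iff.mpr one_pos
  calc Real.arsinh 1 < Real.arsinh (Real.sinh 1) := Real.arsinh_lt_arsinh.mpr h
    _ = 1 := Real.arsinh_sinh 1

lemma two_lt_collarX {ℓ : ℝ} (hℓ : 0 < ℓ) (hℓ2 : ℓ < 2 * Real.arsinh 1) :
    2 < collarX ℓ := by
  have hsinh : Real.sinh (ℓ / 2) < 1 := by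
    have : ℓ / 2 < Real.arsinh 1 := by linarith
    calc Real.sinh (ℓ/2) < Real.sinh (Real.arsinh 1) := Real.sinh_lt_sinh.mpr this
      _ = 1 := Real.sinh_arsinh 1
  have harctan : Real.arctan (Real.sinh (ℓ / 2)) < π / 4 := by
    calc Real.arctan (Real.sinh (ℓ/2)) < Real.arctan 1 := Real.arctan_strictMono hsinh
      _ = π / 4 := Real.arctan_one
  have hl2 : ℓ < 2 := by linarith [arsinh_one_lt_one]
  have hπ : (3:ℝ) < π := Real.pi_gt_three
  have h1 : π < 2 * π / ℓ := by
    rw [lt_div_iff₀ hℓ]; nlinarith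
  have h2 : π / 4 < π / 2 - Real.arctan (Real.sinh (ℓ / 2)) := by linarith
  have := mul_le_mul h1.le h2.le (by linarith) (by linarith)
  unfold collarX
  nlinarith

lemma collarXdelta_add_one_le {ℓ : ℝ} (hℓ : 0 < ℓ) (hℓ2 : ℓ < 2 * Real.arsinh 1) :
    collarXdelta (Real.arsinh 2⁻¹) ℓ + 1 ≤ collarX ℓ := by
  have hX := two_lt_collarX hℓ hℓ2
  unfold collarXdelta
  rw [Real.sinh_arsinh]
  split_ifs with h
  · set u := Real.sinh (ℓ / 2) with hu
    have hu0 : 0 < u := Real.sinh_pos_iff.mpr (by linarith)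
    have huℓ : ℓ / 2 ≤ u := (Real.self_lt_sinh_iff.mpr (by linarith)).le
    have hdiv : u / (2:ℝ)⁻¹ = u * 2 := by field_simp
    rw [hdiv]
    have h2u : u * 2 ≤ 1 := by linarith
    have key1 : u * 2 ≤ Real.arcsin (u * 2) := by
      have hnn : 0 ≤ Real.arcsin (u * 2) := Real.arcsin_nonneg.mpr (by nlinarith)
      calc u * 2 = Real.sin (Real.arcsin (u * 2)) :=
            (Real.sin_arcsin (by nlinarith) h2u).symm
        _ ≤ Real.arcsin (u * 2) := Real.sin_le hnn
    have key2 : Real.arctan u ≤ u := by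
      calc Real.arctan u ≤ Real.tan (Real.arctan u) :=
            Real.le_tan ((by rw [← Real.arctan_zero]; exact Real.arctan_strictMono.monotone hu0.le : 0 ≤ Real.arctan u)) (Real.arctan_lt_pi_div_two u)
        _ = u := Real.tan_arctan u
    have hπℓ : 0 < 2 * π / ℓ := by positivity
    have hd : u ≤ Real.arcsin (u * 2) - Real.arctan u := by linarith
    have h3 := mul_le_mul_of_nonneg_left hd hπℓ.le
    have h4 := mul_le_mul_of_nonneg_left huℓ hπℓ.le
    have h5 : (2 * π / ℓ) * (ℓ / 2) = π := by field_simp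
    have hπ : (3:ℝ) < π := Real.pi_gt_three
    unfold collarX
    nlinarith
  · linarith

lemma one_le_inv_collarRho_sq {ℓ s : ℝ} (hℓ : 0 < ℓ) (hℓ2 : ℓ < 2 * Real.arsinh 1)
    (hs : |s| < collarX ℓ) : (1:ℝ) ≤ ((collarRho ℓ s) ^ 2)⁻¹ := by
  set u := Real.sinh (ℓ / 2) with hu
  have hu0 : 0 < u := Real.sinh_pos_iff.mpr (by linarith)
  have hu1 : u < 1 := by
    have : ℓ / 2 < Real.arsinh 1 := by linarith
    calc u < Real.sinh (Real.arsinh 1) := Real.sinh_lt_sinh.mpr this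
      _ = 1 := Real.sinh_arsinh 1
  have huℓ : ℓ / 2 ≤ u := (Real.self_lt_sinh_iff.mpr (by linarith)).le
  have hπ : (3:ℝ) < π := Real.pi_gt_three
  have harct0 : 0 ≤ Real.arctan u := (by rw [← Real.arctan_zero]; exact Real.arctan_strictMono.monotone hu0.le : 0 ≤ Real.arctan u)
  have harct : Real.arctan u < π / 2 := Real.arctan_lt_pi_div_two u
  have hxabs : |ℓ * s / (2 * π)| ≤ π / 2 - Real.arctan u := by
    have h1 : ℓ * |s| ≤ ℓ * collarX ℓ := mul_le_mul_of_nonneg_left hs.le hℓ.le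
    have h2 : ℓ * collarX ℓ / (2 * π) = π / 2 - Real.arctan u := by
      unfold collarX; field_simp; ring
    rw [abs_div, abs_mul, abs_of_pos hℓ, abs_of_pos (by positivity : (0:ℝ) < 2 * π)]
    rw [div_le_iff₀ (by positivity : (0:ℝ) < 2 * π)]
    rw [← h2]; rw [div_mul_cancel₀]
    · exact h1
    · positivity
  have hcos : u / Real.sqrt 2 ≤ Real.cos (ℓ * s / (2 * π)) := by
    have hsqrt : Real.sqrt (1 + u ^ 2) ≤ Real.sqrt 2 :=
      Real.sqrt_le_sqrt (by nlinarith)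
    have hsq0 : (0:ℝ) < Real.sqrt (1 + u ^ 2) := Real.sqrt_pos.mpr (by positivity)
    calc u / Real.sqrt 2 ≤ u / Real.sqrt (1 + u ^ 2) := by gcongr
      _ = Real.sin (Real.arctan u) := (Real.sin_arctan u).symm
      _ = Real.cos (π / 2 - Real.arctan u) := (Real.cos_pi_div_two_sub _).symm
      _ ≤ Real.cos |ℓ * s / (2 * π)| := by
          apply Real.cos_le_cos_of_nonneg_of_le_pi (abs_nonneg _) (by linarith) hxabs
      _ = Real.cos (ℓ * s / (2 * π)) := Real.cos_abs _
  have hsqrt2 : Real.sqrt 2 ≤ 2 := by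
    nlinarith [Real.sq_sqrt (by norm_num : (0:ℝ) ≤ 2), Real.sqrt_nonneg 2]
  have hsqrt2' : (0:ℝ) < Real.sqrt 2 := by positivity
  have hcosl : ℓ / 4 ≤ Real.cos (ℓ * s / (2 * π)) := by
    have : ℓ / 4 ≤ u / Real.sqrt 2 := by
      rw [div_le_div_iff₀ (by norm_num) hsqrt2']
      nlinarith
    linarith
  have hcos0 : 0 < Real.cos (ℓ * s / (2 * π)) := by linarith
  have hrho_le : collarRho ℓ s ≤ 1 := by
    unfold collarRho
    rw [div_le_one (by positivity)]
    nlinarith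
  have hrho_pos : 0 < collarRho ℓ s := by
    unfold collarRho; positivity
  rw [one_le_inv_iff₀]
  constructor
  · positivity
  · nlinarith


lemma inner_cs (ℓ : ℝ) (φ : ℂ → ℂ) (b : ℤ → ℂ)
    (hφ : DifferentiableOn ℂ φ {w : ℂ | |w.re| < collarX ℓ})
    (hb : ∀ (n : ℤ) (s : ℝ), |s| < collarX ℓ →
      b n = (((2 * π : ℝ) : ℂ))⁻¹ * ∫ θ in (0:ℝ)..(2 * π),
        φ ((s : ℂ) + (θ : ℂ) * Complex.I) *
          Complex.exp (-(n : ℂ) * ((s : ℂ) + (θ : ℂ) * Complex.I)))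
    (n : ℤ) (s : ℝ) (hs : |s| < collarX ℓ) :
    ENNReal.ofReal (2 * π * ‖b n‖ ^ 2 * Real.exp (2 * (n : ℝ) * s)) ≤
      ∫⁻ θ in Set.Ico (0:ℝ) (2 * π),
        (‖φ ((s : ℂ) + (θ : ℂ) * Complex.I)‖₊ : ℝ≥0∞) ^ 2 := by
  have h2π : (0:ℝ) < 2 * π := by positivity
  set g : ℝ → ℂ := fun θ => φ ((s : ℂ) + (θ : ℂ) * Complex.I) with hgdef
  have hgc : Continuous g := by
    rw [← continuousOn_univ]
    apply hφ.continuousOn.comp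
    · exact (Complex.continuous_ofReal.comp continuous_const |>.add
        ((Complex.continuous_ofReal).mul continuous_const)).continuousOn
    · intro θ _
      simp only [Set.mem_setOf_eq, Complex.add_re, Complex.ofReal_re, Complex.mul_re,
        Complex.I_re, Complex.ofReal_im, Complex.I_im]
      simpa using hs
  -- Step (i): bound on the Fourier coefficient
  have hnexp : ∀ θ : ℝ, ‖Complex.exp (-(n : ℂ) * ((s : ℂ) + (θ : ℂ) * Complex.I))‖
      = Real.exp (-(n : ℝ) * s) := by
    intro θ
    rw [Complex.norm_exp]
    congr 1
    simp [Complex.mul_re]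
  have hIb : 2 * π * ‖b n‖ * Real.exp ((n : ℝ) * s) ≤ ∫ θ in (0:ℝ)..(2 * π), ‖g θ‖ := by
    have h1 : ‖b n‖ ≤ (2 * π)⁻¹ * ((∫ θ in (0:ℝ)..(2 * π), ‖g θ‖) * Real.exp (-(n : ℝ) * s)) := by
      rw [hb n s hs]
      rw [norm_mul]
      have hn1 : ‖(((2 * π : ℝ) : ℂ))⁻¹‖ = (2 * π)⁻¹ := by
        rw [norm_inv, Complex.norm_real, Real.norm_of_nonneg h2π.le]
      rw [hn1]
      apply mul_le_mul_of_nonneg_left _ (by positivity)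
      calc ‖∫ θ in (0:ℝ)..(2 * π), g θ * Complex.exp (-(n : ℂ) * ((s:ℂ) + (θ:ℂ) * Complex.I))‖
          ≤ ∫ θ in (0:ℝ)..(2 * π), ‖g θ * Complex.exp (-(n : ℂ) * ((s:ℂ) + (θ:ℂ) * Complex.I))‖ :=
            intervalIntegral.norm_integral_le_integral_norm h2π.le
        _ = ∫ θ in (0:ℝ)..(2 * π), ‖g θ‖ * Real.exp (-(n : ℝ) * s) := by
            apply intervalIntegral.integral_congr
            intro θ _
            show ‖g θ * Complex.exp (-(n : ℂ) * ((s:ℂ) + (θ:ℂ) * Complex.I))‖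
              = ‖g θ‖ * Real.exp (-(n : ℝ) * s)
            rw [norm_mul, hnexp θ]
        _ = (∫ θ in (0:ℝ)..(2 * π), ‖g θ‖) * Real.exp (-(n : ℝ) * s) :=
            intervalIntegral.integral_mul_const _ _
    have hexp_pos : 0 < Real.exp ((n : ℝ) * s) := Real.exp_pos _
    have h2 := mul_le_mul_of_nonneg_left h1 (le_of_lt (mul_pos h2π hexp_pos))
    calc 2 * π * ‖b n‖ * Real.exp ((n : ℝ) * s)
        = 2 * π * Real.exp ((n : ℝ) * s) * ‖b n‖ := by ring
      _ ≤ 2 * π * Real.exp ((n : ℝ) * s) *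
          ((2 * π)⁻¹ * ((∫ θ in (0:ℝ)..(2 * π), ‖g θ‖) * Real.exp (-(n : ℝ) * s))) := h2
      _ = (∫ θ in (0:ℝ)..(2 * π), ‖g θ‖) * ((2 * π) * (2 * π)⁻¹) *
            (Real.exp ((n:ℝ) * s) * Real.exp (-(n:ℝ) * s)) := by ring
      _ = ∫ θ in (0:ℝ)..(2 * π), ‖g θ‖ := by
          rw [mul_inv_cancel₀ h2π.ne', ← Real.exp_add]
          norm_num
  -- Step (ii): identify the real integral with a lintegral on Ico
  have hIcoIoc : (volume : Measure ℝ).restrict (Set.Ico (0:ℝ) (2 * π))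
      = (volume : Measure ℝ).restrict (Set.Ioc (0:ℝ) (2 * π)) :=
    Measure.restrict_congr_set Ico_ae_eq_Ioc
  have hInt : IntegrableOn (fun θ => ‖g θ‖) (Set.Ioc (0:ℝ) (2 * π)) :=
    (hgc.norm).integrableOn_Ioc
  have hEq1 : ENNReal.ofReal (∫ θ in (0:ℝ)..(2 * π), ‖g θ‖)
      = ∫⁻ θ in Set.Ico (0:ℝ) (2 * π), (‖g θ‖₊ : ℝ≥0∞) := by
    rw [intervalIntegral.integral_of_le h2π.le,
      ofReal_integral_eq_lintegral_ofReal hInt (ae_of_all _ fun θ => norm_nonneg _)]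
    rw [show (fun θ => ENNReal.ofReal ‖g θ‖) = fun θ => (‖g θ‖₊ : ℝ≥0∞) from
      funext fun θ => ofReal_norm (g θ)]
    rw [hIcoIoc]
  -- Step (iii): Cauchy-Schwarz
  set A := ∫⁻ θ in Set.Ico (0:ℝ) (2 * π), (‖g θ‖₊ : ℝ≥0∞) ^ 2 with hA
  have hmeas : AEMeasurable (fun θ => (‖g θ‖₊ : ℝ≥0∞))
      ((volume : Measure ℝ).restrict (Set.Ico (0:ℝ) (2 * π))) :=
    (hgc.measurable.nnnorm.coe_nnreal_ennreal).aemeasurable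
  have hCS : ∫⁻ θ in Set.Ico (0:ℝ) (2 * π), (‖g θ‖₊ : ℝ≥0∞)
      ≤ A ^ (1/2 : ℝ) * (ENNReal.ofReal (2 * π)) ^ (1/2 : ℝ) := by
    have hconj : (2:ℝ).HolderConjugate 2 := Real.HolderConjugate.two_two
    have := ENNReal.lintegral_mul_le_Lp_mul_Lq
      ((volume : Measure ℝ).restrict (Set.Ico (0:ℝ) (2 * π))) hconj hmeas
      (aemeasurable_const (b := (1:ℝ≥0∞)))
    simp only [Pi.mul_apply, mul_one, ENNReal.one_rpow] at this
    have h22 : ∀ x : ℝ≥0∞, x ^ (2:ℝ) = x ^ (2:ℕ) := fun x => by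
      rw [← ENNReal.rpow_natCast]; norm_num
    have hvol : ∫⁻ _ in Set.Ico (0:ℝ) (2 * π), (1:ℝ≥0∞) = ENNReal.ofReal (2 * π) := by
      rw [setLIntegral_const, one_mul, Real.volume_Ico]
      norm_num
    calc ∫⁻ θ in Set.Ico (0:ℝ) (2 * π), (‖g θ‖₊ : ℝ≥0∞)
        ≤ (∫⁻ θ in Set.Ico (0:ℝ) (2 * π), (‖g θ‖₊ : ℝ≥0∞) ^ (2:ℝ)) ^ (1/2 : ℝ) *
          (∫⁻ _ in Set.Ico (0:ℝ) (2 * π), (1:ℝ≥0∞)) ^ (1/2 : ℝ) := this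
      _ = A ^ (1/2 : ℝ) * (ENNReal.ofReal (2 * π)) ^ (1/2 : ℝ) := by
          simp only [h22]
          rw [hA, hvol]
  -- Step (iv): combine
  have hx : ENNReal.ofReal (2 * π * ‖b n‖ * Real.exp ((n : ℝ) * s))
      ≤ A ^ (1/2 : ℝ) * (ENNReal.ofReal (2 * π)) ^ (1/2 : ℝ) := by
    refine le_trans ?_ hCS
    rw [← hEq1]
    exact ENNReal.ofReal_le_ofReal hIb
  have hsq : (ENNReal.ofReal (2 * π * ‖b n‖ * Real.exp ((n : ℝ) * s))) ^ (2:ℝ)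
      ≤ A * ENNReal.ofReal (2 * π) := by
    calc (ENNReal.ofReal (2 * π * ‖b n‖ * Real.exp ((n : ℝ) * s))) ^ (2:ℝ)
        ≤ (A ^ (1/2 : ℝ) * (ENNReal.ofReal (2 * π)) ^ (1/2 : ℝ)) ^ (2:ℝ) :=
          ENNReal.rpow_le_rpow hx (by norm_num)
      _ = A * ENNReal.ofReal (2 * π) := by
          rw [ENNReal.mul_rpow_of_nonneg _ _ (by norm_num : (0:ℝ) ≤ 2),
            ← ENNReal.rpow_mul, ← ENNReal.rpow_mul]
          norm_num
  have hid : ENNReal.ofReal (2 * π * ‖b n‖ ^ 2 * Real.exp (2 * (n : ℝ) * s)) *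
      ENNReal.ofReal (2 * π)
      = (ENNReal.ofReal (2 * π * ‖b n‖ * Real.exp ((n : ℝ) * s))) ^ (2:ℝ) := by
    have h22 : ∀ x : ℝ≥0∞, x ^ (2:ℝ) = x ^ (2:ℕ) := fun x => by
      rw [← ENNReal.rpow_natCast]; norm_num
    rw [h22, ← ENNReal.ofReal_pow (by positivity), ← ENNReal.ofReal_mul (by positivity)]
    congr 1
    rw [show 2 * (n:ℝ) * s = (n:ℝ) * s + (n:ℝ) * s by ring, Real.exp_add]
    ring
  have hne0 : ENNReal.ofReal (2 * π) ≠ 0 := by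
    simp [ENNReal.ofReal_eq_zero]; positivity
  have hnetop : ENNReal.ofReal (2 * π) ≠ ⊤ := ENNReal.ofReal_ne_top
  have := (ENNReal.mul_le_mul_iff_left hne0 hnetop).mp (hid ▸ hsq)
  exact this


lemma collar_aux (ℓ : ℝ) (hℓ : 0 < ℓ) (hℓ2 : ℓ < 2 * Real.arsinh 1)
    (φ : ℂ → ℂ) (b : ℤ → ℂ)
    (hφ : DifferentiableOn ℂ φ {w : ℂ | |w.re| < collarX ℓ})
    (hb : ∀ (n : ℤ) (s : ℝ), |s| < collarX ℓ →
      b n = (((2 * π : ℝ) : ℂ))⁻¹ * ∫ θ in (0:ℝ)..(2 * π),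
        φ ((s : ℂ) + (θ : ℂ) * Complex.I) *
          Complex.exp (-(n : ℂ) * ((s : ℂ) + (θ : ℂ) * Complex.I)))
    (n : ℤ) (M α β : ℝ) (hM : M = |(n : ℝ)|) (hM1 : 1 ≤ M)
    (hαβ : α ≤ β) (hlen : β - α = 1 / (4 * M))
    (hsub : ∀ s ∈ Set.Icc α β, collarXdelta (Real.arsinh 2⁻¹) ℓ ≤ |s| ∧ |s| < collarX ℓ)
    (hns : ∀ s ∈ Set.Icc α β, 2 * M * collarX ℓ - 1 ≤ 2 * (n : ℝ) * s) :
    ENNReal.ofReal (1 * ‖b n‖ ^ 2 * |(n : ℝ)|⁻¹ * Real.exp (2 * |(n : ℝ)| * collarX ℓ)) ≤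
      (4 : ℝ≥0∞) * ∫⁻ p in {p : ℝ × ℝ | collarXdelta (Real.arsinh 2⁻¹) ℓ ≤ |p.1| ∧
            |p.1| < collarX ℓ ∧ p.2 ∈ Set.Ico (0:ℝ) (2 * π)},
          (‖φ ((p.1 : ℂ) + (p.2 : ℂ) * Complex.I)‖₊ : ℝ≥0∞) ^ 2 *
            ENNReal.ofReal (((collarRho ℓ p.1) ^ 2)⁻¹) := by
  have h2π : (0:ℝ) < 2 * π := by positivity
  have hM0 : (0:ℝ) < M := lt_of_lt_of_le one_pos hM1
  set X := collarX ℓ with hX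
  set Xd := collarXdelta (Real.arsinh 2⁻¹) ℓ with hXd
  set S : Set (ℝ × ℝ) := Set.Icc α β ×ˢ Set.Ico (0:ℝ) (2 * π) with hS
  set R : Set (ℝ × ℝ) := {p : ℝ × ℝ | Xd ≤ |p.1| ∧ |p.1| < X ∧ p.2 ∈ Set.Ico (0:ℝ) (2 * π)}
    with hR
  set F : ℝ × ℝ → ℝ≥0∞ := fun p => (‖φ ((p.1 : ℂ) + (p.2 : ℂ) * Complex.I)‖₊ : ℝ≥0∞) ^ 2
    with hF
  set W : ℝ × ℝ → ℝ≥0∞ := fun p => ENNReal.ofReal (((collarRho ℓ p.1) ^ 2)⁻¹) with hW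
  have hSR : S ⊆ R := by
    rintro ⟨s, θ⟩ ⟨hs, hθ⟩
    exact ⟨(hsub s hs).1, (hsub s hs).2, hθ⟩
  have hmeasS : MeasurableSet S := measurableSet_Icc.prod measurableSet_Ico
  -- continuity of F on S
  have hcont : ContinuousOn (fun p : ℝ × ℝ => φ ((p.1 : ℂ) + (p.2 : ℂ) * Complex.I)) S := by
    apply hφ.continuousOn.comp
    · exact ((Complex.continuous_ofReal.comp continuous_fst).add
        ((Complex.continuous_ofReal.comp continuous_snd).mul continuous_const)).continuousOn
    · rintro ⟨s, θ⟩ hp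
      simp only [Set.mem_setOf_eq, Complex.add_re, Complex.ofReal_re, Complex.mul_re,
        Complex.I_re, Complex.ofReal_im, Complex.I_im]
      simpa using (hsub s hp.1).2
  have hFcont : ContinuousOn F S := by
    exact ((ENNReal.continuous_pow 2).comp
      (ENNReal.continuous_coe.comp continuous_nnnorm)).comp_continuousOn hcont
  -- Tonelli
  have hprodset : (volume : Measure (ℝ × ℝ)).restrict S
      = ((volume : Measure ℝ).restrict (Set.Icc α β)).prod
        ((volume : Measure ℝ).restrict (Set.Ico (0:ℝ) (2 * π))) := by
    rw [Measure.volume_eq_prod, Measure.prod_restrict]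
  have hAE : AEMeasurable F (((volume : Measure ℝ).restrict (Set.Icc α β)).prod
      ((volume : Measure ℝ).restrict (Set.Ico (0:ℝ) (2 * π)))) := by
    rw [← hprodset]
    exact hFcont.aemeasurable hmeasS
  have hTon : ∫⁻ p in S, F p = ∫⁻ s in Set.Icc α β,
      ∫⁻ θ in Set.Ico (0:ℝ) (2 * π), F (s, θ) := by
    rw [hprodset]
    exact MeasureTheory.lintegral_prod F hAE
  -- inner bound
  set K : ℝ≥0∞ := ENNReal.ofReal (2 * π * ‖b n‖ ^ 2 * Real.exp (2 * M * X - 1)) with hK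
  have hinner : ∀ s ∈ Set.Icc α β,
      K ≤ ∫⁻ θ in Set.Ico (0:ℝ) (2 * π), F (s, θ) := by
    intro s hs
    refine le_trans ?_ (inner_cs ℓ φ b hφ hb n s (hsub s hs).2)
    apply ENNReal.ofReal_le_ofReal
    have := hns s hs
    have hexp : Real.exp (2 * M * X - 1) ≤ Real.exp (2 * (n:ℝ) * s) :=
      Real.exp_le_exp.mpr this
    exact mul_le_mul_of_nonneg_left hexp (by positivity)
  have houter : K * ENNReal.ofReal (1 / (4 * M)) ≤ ∫⁻ p in S, F p := by
    rw [hTon]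
    calc K * ENNReal.ofReal (1 / (4 * M))
        = K * volume (Set.Icc α β) := by rw [Real.volume_Icc, hlen]
      _ = ∫⁻ _ in Set.Icc α β, K := (setLIntegral_const _ _).symm
      _ ≤ ∫⁻ s in Set.Icc α β, ∫⁻ θ in Set.Ico (0:ℝ) (2 * π), F (s, θ) := by
          apply lintegral_mono_ae
          rw [ae_restrict_iff' measurableSet_Icc]
          exact ae_of_all _ hinner
  -- weight
  have hweight : ∫⁻ p in S, F p ≤ ∫⁻ p in S, F p * W p := by
    apply lintegral_mono_ae
    rw [ae_restrict_iff' hmeasS]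
    refine ae_of_all _ ?_
    rintro ⟨s, θ⟩ hp
    have h1 : (1:ℝ≥0∞) ≤ W (s, θ) := by
      rw [hW]
      exact ENNReal.one_le_ofReal.mpr (one_le_inv_collarRho_sq hℓ hℓ2 (hsub s hp.1).2)
    calc F (s, θ) = F (s, θ) * 1 := (mul_one _).symm
      _ ≤ F (s, θ) * W (s, θ) := mul_le_mul_right h1 _
  have hregion : ∫⁻ p in S, F p * W p ≤ ∫⁻ p in R, F p * W p :=
    lintegral_mono_set hSR
  -- final numeric comparison
  have hfinal : ENNReal.ofReal (1 * ‖b n‖ ^ 2 * |(n : ℝ)|⁻¹ * Real.exp (2 * |(n : ℝ)| * X))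
      ≤ (4 : ℝ≥0∞) * (K * ENNReal.ofReal (1 / (4 * M))) := by
    rw [hK, ← hM]
    rw [show (4:ℝ≥0∞) = ENNReal.ofReal 4 by norm_num]
    rw [← ENNReal.ofReal_mul (by positivity), ← ENNReal.ofReal_mul (by norm_num)]
    apply ENNReal.ofReal_le_ofReal
    have he1 : Real.exp 1 ≤ 2 * π := by
      nlinarith [Real.exp_one_lt_d9, Real.pi_gt_three]
    have hexp : Real.exp (2 * M * X - 1) = Real.exp (2 * M * X) / Real.exp 1 :=
      Real.exp_sub _ _
    rw [hexp]
    have hepos : (0:ℝ) < Real.exp 1 := Real.exp_pos 1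
    have hEpos : (0:ℝ) < Real.exp (2 * M * X) := Real.exp_pos _
    have hbnn : (0:ℝ) ≤ ‖b n‖ ^ 2 := sq_nonneg _
    rw [div_eq_mul_inv, one_mul]
    have key : ‖b n‖ ^ 2 * M⁻¹ * Real.exp (2 * M * X)
        ≤ 4 * (2 * π * ‖b n‖ ^ 2 * (Real.exp (2 * M * X) * (Real.exp 1)⁻¹) * (1 / (4 * M))) := by
      rw [show 4 * (2 * π * ‖b n‖ ^ 2 * (Real.exp (2 * M * X) * (Real.exp 1)⁻¹) * (1 / (4 * M)))
          = (2 * π * (Real.exp 1)⁻¹) * (‖b n‖ ^ 2 * M⁻¹ * Real.exp (2 * M * X)) by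
        field_simp]
      have h1le : (1:ℝ) ≤ 2 * π * (Real.exp 1)⁻¹ := by
        rw [le_mul_inv_iff₀ hepos]
        linarith
      nlinarith [mul_pos (mul_pos hM0 hEpos) hepos, inv_pos.mpr hM0,
        mul_nonneg (mul_nonneg hbnn (inv_pos.mpr hM0).le) hEpos.le]
    exact key
  calc ENNReal.ofReal (1 * ‖b n‖ ^ 2 * |(n : ℝ)|⁻¹ * Real.exp (2 * |(n : ℝ)| * X))
      ≤ (4 : ℝ≥0∞) * (K * ENNReal.ofReal (1 / (4 * M))) := hfinal
    _ ≤ (4 : ℝ≥0∞) * ∫⁻ p in R, F p * W p := by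
        apply mul_le_mul_right
        exact le_trans houter (le_trans hweight hregion)


/-- For a holomorphic quadratic differential `Φ = φ dw²` on the collar `C(ℓ)` with Fourier
coefficients `b n`, one has `c |b_n|² |n|⁻¹ e^{2|n| X(ℓ)} ≤ ‖Φ‖²_{L²(δ₀-thick(C(ℓ)))}`
for every nonzero `n`, uniformly in `ℓ`. -/
theorem fourier_coefficient_bound :
    ∃ δ₀ c : ℝ, 0 < δ₀ ∧ δ₀ < Real.arsinh 1 ∧ 0 < c ∧
      ∀ ℓ : ℝ, 0 < ℓ → ℓ < 2 * Real.arsinh 1 →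
      ∀ φ : ℂ → ℂ, ∀ b : ℤ → ℂ,
        DifferentiableOn ℂ φ {w : ℂ | |w.re| < collarX ℓ} →
        (∀ w : ℂ, φ (w + 2 * (π : ℂ) * Complex.I) = φ w) →
        (∀ (n : ℤ) (s : ℝ), |s| < collarX ℓ →
          b n = (((2 * π : ℝ) : ℂ))⁻¹ * ∫ θ in (0:ℝ)..(2 * π),
            φ ((s : ℂ) + (θ : ℂ) * Complex.I) *
              Complex.exp (-(n : ℂ) * ((s : ℂ) + (θ : ℂ) * Complex.I))) →
        ∀ n : ℤ, n ≠ 0 →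
          ENNReal.ofReal (c * ‖b n‖ ^ 2 * |(n : ℝ)|⁻¹ * Real.exp (2 * |(n : ℝ)| * collarX ℓ)) ≤
            (4 : ℝ≥0∞) * ∫⁻ p in {p : ℝ × ℝ | collarXdelta δ₀ ℓ ≤ |p.1| ∧
                  |p.1| < collarX ℓ ∧ p.2 ∈ Set.Ico (0:ℝ) (2 * π)},
                (‖φ ((p.1 : ℂ) + (p.2 : ℂ) * Complex.I)‖₊ : ℝ≥0∞) ^ 2 *
                  ENNReal.ofReal (((collarRho ℓ p.1) ^ 2)⁻¹) := by
  refine ⟨Real.arsinh 2⁻¹, 1, Real.arsinh_pos_iff.mpr (by norm_num),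
    Real.arsinh_lt_arsinh.mpr (by norm_num), one_pos, ?_⟩
  intro ℓ hℓ hℓ2 φ b hφ hper hb n hn
  set M : ℝ := |(n : ℝ)| with hM
  have hM1 : (1:ℝ) ≤ M := by
    rw [hM, ← Int.cast_abs]
    exact_mod_cast Int.one_le_abs hn
  have hM0 : (0:ℝ) < M := lt_of_lt_of_le one_pos hM1
  have hX2 : 2 < collarX ℓ := two_lt_collarX hℓ hℓ2
  have hXd : collarXdelta (Real.arsinh 2⁻¹) ℓ + 1 ≤ collarX ℓ :=
    collarXdelta_add_one_le hℓ hℓ2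
  have hfrac1 : 1 / (4 * M) ≤ 1 / (2 * M) :=
    one_div_le_one_div_of_le (by positivity) (by linarith)
  have hfrac2 : 1 / (2 * M) ≤ 1 := by
    rw [div_le_one (by positivity)]
    linarith
  have hfrac3 : (0:ℝ) < 1 / (4 * M) := by positivity
  rcases lt_or_gt_of_ne hn with hneg | hpos
  · -- n < 0
    have hncast : (n : ℝ) < 0 := by exact_mod_cast hneg
    have hnM : (n : ℝ) = -M := by rw [hM, abs_of_neg hncast]; ring
    apply collar_aux ℓ hℓ hℓ2 φ b hφ hb n M
      (-(collarX ℓ - 1 / (4 * M))) (-(collarX ℓ - 1 / (2 * M))) hM hM1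
    · linarith
    · ring_nf
    · intro s hs
      obtain ⟨hs1, hs2⟩ := hs
      have hsneg : s < 0 := by linarith
      have habs : |s| = -s := abs_of_neg hsneg
      constructor
      · rw [habs]; linarith
      · rw [habs]; linarith
    · intro s hs
      obtain ⟨hs1, hs2⟩ := hs
      rw [hnM]
      have h := mul_le_mul_of_nonneg_left hs2 (by positivity : (0:ℝ) ≤ 2 * M)
      have he : 2 * M * (collarX ℓ - 1 / (2 * M)) = 2 * M * collarX ℓ - 1 := by
        field_simp
      nlinarith
  · -- n > 0
    have hncast : (0:ℝ) < (n : ℝ) := by exact_mod_cast hpos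
    have hnM : (n : ℝ) = M := (abs_of_pos hncast).symm ▸ hM.symm ▸ rfl
    apply collar_aux ℓ hℓ hℓ2 φ b hφ hb n M
      (collarX ℓ - 1 / (2 * M)) (collarX ℓ - 1 / (4 * M)) hM hM1
    · linarith
    · ring_nf
    · intro s hs
      obtain ⟨hs1, hs2⟩ := hs
      have hspos : 0 < s := by linarith
      have habs : |s| = s := abs_of_pos hspos
      constructor
      · rw [habs]; linarith
      · rw [habs]; linarith
    · intro s hs
      obtain ⟨hs1, hs2⟩ := hs
      rw [hnM]
      have h := mul_le_mul_of_nonneg_left hs1 (by positivity : (0:ℝ) ≤ 2 * M)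
      have he : 2 * M * (collarX ℓ - 1 / (2 * M)) = 2 * M * collarX ℓ - 1 := by
        field_simp
      nlinarith
end

section
/- For every ℓ ∈ (0, 2·arsinh(1)] and every nonzero integer n, the function s ↦ e^{ns}·cos²(ℓs/(2π)) is monotone on the interval [−X(ℓ), X(ℓ)]: it is monotone increasing if n ≥ 1 and monotone decreasing if n ≤ −1. Consequently, for n ≠ 0 the function s ↦ e^{ns}·ρ_ℓ(s)^{−2} attains its supremum over any symmetric subinterval [−Y, Y] ⊆ [−X(ℓ), X(ℓ)] at an endpoint. -/
open Real Set

lemma collar_hasDerivAt (ℓ c s : ℝ) :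
    HasDerivAt (fun s : ℝ => Real.exp (c * s) * Real.cos (ℓ * s / (2 * π)) ^ 2)
      (Real.exp (c * s) * Real.cos (ℓ * s / (2 * π)) *
        (c * Real.cos (ℓ * s / (2 * π)) - 2 * (ℓ / (2 * π)) * Real.sin (ℓ * s / (2 * π)))) s := by
  have h1 : HasDerivAt (fun s : ℝ => c * s) c s := by
    simpa using (hasDerivAt_id s).const_mul c
  have hExp := h1.exp
  have hInner : HasDerivAt (fun s : ℝ => ℓ * s / (2 * π)) (ℓ / (2 * π)) s := by
    simpa using ((hasDerivAt_id s).const_mul ℓ).div_const (2 * π)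
  have hCos := (Real.hasDerivAt_cos (ℓ * s / (2 * π))).comp s hInner
  have hSq : HasDerivAt (fun x => Real.cos (ℓ * x / (2 * π)) ^ 2) _ s := hCos.pow 2
  have : HasDerivAt (fun x => Real.exp (c * x) * Real.cos (ℓ * x / (2 * π)) ^ 2) _ s :=
    hExp.fun_mul hSq
  convert this using 1
  simp only [Function.comp_apply, pow_one]
  push_cast
  ring

/-- For `ℓ ∈ (0, 2 arsinh 1]` and a nonzero integer `n`, the function
`s ↦ e^{ns} cos²(ℓs/(2π))` is monotone on `[-X(ℓ), X(ℓ)]` (increasing for `n ≥ 1`,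
decreasing for `n ≤ -1`); consequently `s ↦ e^{ns} ρ_ℓ(s)^{-2}` attains its supremum over
any symmetric subinterval `[-Y, Y] ⊆ [-X(ℓ), X(ℓ)]` at an endpoint. -/
theorem exp_cos_sq_monotone (ℓ : ℝ) (h1 : 0 < ℓ) (h2 : ℓ ≤ 2 * Real.arsinh 1)
    (n : ℤ) (hn : n ≠ 0) :
    ((1 ≤ n → MonotoneOn (fun s : ℝ => Real.exp ((n : ℝ) * s) * Real.cos (ℓ * s / (2 * π)) ^ 2)
        (Set.Icc (-(collarX ℓ)) (collarX ℓ))) ∧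
     (n ≤ -1 → AntitoneOn (fun s : ℝ => Real.exp ((n : ℝ) * s) * Real.cos (ℓ * s / (2 * π)) ^ 2)
        (Set.Icc (-(collarX ℓ)) (collarX ℓ)))) ∧
    ∀ Y : ℝ, 0 ≤ Y → Y ≤ collarX ℓ → ∀ s ∈ Set.Icc (-Y) Y,
      Real.exp ((n : ℝ) * s) * ((collarRho ℓ s) ^ 2)⁻¹
        ≤ max (Real.exp ((n : ℝ) * (-Y)) * ((collarRho ℓ (-Y)) ^ 2)⁻¹)
              (Real.exp ((n : ℝ) * Y) * ((collarRho ℓ Y) ^ 2)⁻¹) := by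
  have hπ : (0:ℝ) < π := Real.pi_pos
  set X := collarX ℓ with hX
  set a := ℓ / (2 * π) with ha
  have haPos : 0 < a := by positivity
  -- a * X = π/2 - arctan (sinh (ℓ/2))
  have haX : a * X = π / 2 - Real.arctan (Real.sinh (ℓ / 2)) := by
    rw [hX, collarX, ha]
    field_simp
  have hArcPos : 0 < Real.arctan (Real.sinh (ℓ / 2)) := by
    have := Real.arctan_strictMono (Real.sinh_pos_iff.mpr (show (0:ℝ) < ℓ / 2 by linarith))
    simpa using this
  have hArcLt : Real.arctan (Real.sinh (ℓ / 2)) < π / 2 := Real.arctan_lt_pi_div_two _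
  have haX1 : 0 < a * X := by rw [haX]; linarith
  have haX2 : a * X < π / 2 := by rw [haX]; linarith
  have hXpos : 0 < X := by
    rcases mul_pos_iff.mp haX1 with ⟨_, h⟩ | ⟨h, _⟩
    · exact h
    · linarith
  -- tan (a * X) = (sinh (ℓ/2))⁻¹
  have htanaX : Real.tan (a * X) = (Real.sinh (ℓ / 2))⁻¹ := by
    rw [haX, Real.tan_pi_div_two_sub, Real.tan_arctan]
  have hsinh : ℓ / 2 < Real.sinh (ℓ / 2) := Real.self_lt_sinh_iff.mpr (by linarith)
  have hsinhPos : 0 < Real.sinh (ℓ / 2) := by linarith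
  -- key bound : 2 * a * tan (a * X) ≤ 1
  have hkey : 2 * a * Real.tan (a * X) < 1 := by
    rw [htanaX]
    have hinv : (Real.sinh (ℓ / 2))⁻¹ < (ℓ / 2)⁻¹ := inv_strictAnti₀ (by positivity) hsinh
    calc 2 * a * (Real.sinh (ℓ / 2))⁻¹ < 2 * a * (ℓ / 2)⁻¹ :=
          mul_lt_mul_of_pos_left hinv (by positivity)
      _ = 2 / π := by rw [ha]; field_simp
      _ < 1 := by rw [div_lt_one hπ]; linarith [Real.pi_gt_three]
  -- pointwise facts on the interval
  have hmem : ∀ s ∈ Set.Icc (-X) X, -(π/2) < a * s ∧ a * s < π/2 := by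
    intro s hs
    constructor
    · nlinarith [hs.1, haX2, mul_le_mul_of_nonneg_left hs.1 haPos.le]
    · nlinarith [hs.2, haX2, mul_le_mul_of_nonneg_left hs.2 haPos.le]
  have hcosPos : ∀ s ∈ Set.Icc (-X) X, 0 < Real.cos (ℓ * s / (2 * π)) := by
    intro s hs
    have h := hmem s hs
    have : ℓ * s / (2 * π) = a * s := by rw [ha]; ring
    rw [this]
    exact Real.cos_pos_of_mem_Ioo ⟨h.1, h.2⟩
  have htanle : ∀ s ∈ Set.Icc (-X) X, Real.tan (a * s) ≤ Real.tan (a * X) := by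
    intro s hs
    rcases eq_or_lt_of_le hs.2 with h | h
    · rw [h]
    · exact le_of_lt (Real.tan_lt_tan_of_lt_of_lt_pi_div_two ((hmem s hs).1)
        haX2 (mul_lt_mul_of_pos_left h haPos))
  have htange : ∀ s ∈ Set.Icc (-X) X, -Real.tan (a * X) ≤ Real.tan (a * s) := by
    intro s hs
    have hXmem : -X ∈ Set.Icc (-X) X := ⟨le_refl _, by linarith⟩
    have : Real.tan (a * (-X)) ≤ Real.tan (a * s) := by
      rcases eq_or_lt_of_le hs.1 with h | h
      · rw [← h]
      · exact le_of_lt (Real.tan_lt_tan_of_lt_of_lt_pi_div_two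
          (by rw [show a * (-X) = -(a*X) by ring]; linarith)
          (hmem s hs).2 (mul_lt_mul_of_pos_left h haPos))
    rwa [show a * (-X) = -(a * X) by ring, Real.tan_neg] at this
  -- monotone core
  have hMono : ∀ c : ℝ, 1 ≤ c →
      MonotoneOn (fun s : ℝ => Real.exp (c * s) * Real.cos (ℓ * s / (2 * π)) ^ 2)
        (Set.Icc (-X) X) := by
    intro c hc
    apply monotoneOn_of_deriv_nonneg (convex_Icc _ _)
    · exact (Real.continuous_exp.comp (continuous_const.mul continuous_id)).continuousOn.mul
        (((Real.continuous_cos.comp ((continuous_const.mul continuous_id).div_const _)).pow 2).continuousOn)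
    · intro s hs
      exact (collar_hasDerivAt ℓ c s).differentiableAt.differentiableWithinAt
    · intro s hs
      rw [interior_Icc] at hs
      rw [(collar_hasDerivAt ℓ c s).deriv]
      have hs' : s ∈ Set.Icc (-X) X := Set.mem_Icc_of_Ioo hs
      have hcp := hcosPos s hs'
      have hts := htanle s hs'
      have hsin : Real.sin (ℓ * s / (2 * π)) = Real.tan (a * s) * Real.cos (ℓ * s / (2 * π)) := by
        have heq : ℓ * s / (2 * π) = a * s := by rw [ha]; ring
        rw [heq, Real.tan_eq_sin_div_cos]
        field_simp [← heq, ne_of_gt hcp]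
      have hfac : 0 ≤ c * Real.cos (ℓ * s / (2 * π)) - 2 * a * Real.sin (ℓ * s / (2 * π)) := by
        rw [hsin]
        have h2 : 2 * a * Real.tan (a * s) ≤ 1 := by
          calc 2 * a * Real.tan (a * s) ≤ 2 * a * Real.tan (a * X) :=
            mul_le_mul_of_nonneg_left hts (by positivity)
          _ ≤ 1 := hkey.le
        nlinarith
      rw [← ha]
      exact mul_nonneg (mul_nonneg (Real.exp_pos _).le hcp.le) hfac
  have hAnti : ∀ c : ℝ, c ≤ -1 →
      AntitoneOn (fun s : ℝ => Real.exp (c * s) * Real.cos (ℓ * s / (2 * π)) ^ 2)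
        (Set.Icc (-X) X) := by
    intro c hc
    apply antitoneOn_of_deriv_nonpos (convex_Icc _ _)
    · exact (Real.continuous_exp.comp (continuous_const.mul continuous_id)).continuousOn.mul
        (((Real.continuous_cos.comp ((continuous_const.mul continuous_id).div_const _)).pow 2).continuousOn)
    · intro s hs
      exact (collar_hasDerivAt ℓ c s).differentiableAt.differentiableWithinAt
    · intro s hs
      rw [interior_Icc] at hs
      rw [(collar_hasDerivAt ℓ c s).deriv]
      have hs' : s ∈ Set.Icc (-X) X := Set.mem_Icc_of_Ioo hs
      have hcp := hcosPos s hs'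
      have hts := htange s hs'
      have hsin : Real.sin (ℓ * s / (2 * π)) = Real.tan (a * s) * Real.cos (ℓ * s / (2 * π)) := by
        have heq : ℓ * s / (2 * π) = a * s := by rw [ha]; ring
        rw [heq, Real.tan_eq_sin_div_cos]
        field_simp [← heq, ne_of_gt hcp]
      have hfac : c * Real.cos (ℓ * s / (2 * π)) - 2 * a * Real.sin (ℓ * s / (2 * π)) ≤ 0 := by
        rw [hsin]
        have h2 : -1 ≤ 2 * a * Real.tan (a * s) := by
          calc (-1:ℝ) ≤ -(2 * a * Real.tan (a * X)) := by linarith [hkey]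
          _ = 2 * a * (-Real.tan (a * X)) := by ring
          _ ≤ 2 * a * Real.tan (a * s) := mul_le_mul_of_nonneg_left hts (by positivity)
        nlinarith
      rw [← ha]
      exact mul_nonpos_of_nonneg_of_nonpos (mul_nonneg (Real.exp_pos _).le hcp.le) hfac
  refine ⟨⟨fun h => hMono n (by exact_mod_cast h), fun h => hAnti n (by exact_mod_cast h)⟩, ?_⟩
  intro Y hY0 hYX s hs
  have hsub : Set.Icc (-Y) Y ⊆ Set.Icc (-X) X :=
    Set.Icc_subset_Icc (by linarith) hYX
  have hsX := hsub hs
  have hYmem : Y ∈ Set.Icc (-X) X := ⟨by linarith, hYX⟩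
  have hnYmem : -Y ∈ Set.Icc (-X) X := ⟨by linarith, by linarith⟩
  -- rewrite rho
  have hrho : ∀ t ∈ Set.Icc (-X) X,
      ((collarRho ℓ t) ^ 2)⁻¹ = (2 * π / ℓ)^2 * Real.cos (ℓ * t / (2 * π)) ^ 2 := by
    intro t ht
    have hc := hcosPos t ht
    rw [collarRho]
    field_simp
  rw [hrho s hsX, hrho Y hYmem, hrho (-Y) hnYmem]
  have hcoef : (0:ℝ) ≤ (2 * π / ℓ)^2 := by positivity
  have key : Real.exp ((n:ℝ) * s) * Real.cos (ℓ * s / (2 * π)) ^ 2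
      ≤ max (Real.exp ((n:ℝ) * (-Y)) * Real.cos (ℓ * (-Y) / (2 * π)) ^ 2)
            (Real.exp ((n:ℝ) * Y) * Real.cos (ℓ * Y / (2 * π)) ^ 2) := by
    rcases hn.lt_or_gt with h | h
    · have h' : n ≤ -1 := by omega
      refine le_max_of_le_left ?_
      exact hAnti n (by exact_mod_cast h') hnYmem hsX hs.1
    · have h' : 1 ≤ n := by omega
      refine le_max_of_le_right ?_
      exact hMono n (by exact_mod_cast h') hsX hYmem hs.2
  calc Real.exp ((n:ℝ) * s) * ((2 * π / ℓ)^2 * Real.cos (ℓ * s / (2 * π)) ^ 2)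
      = (2 * π / ℓ)^2 * (Real.exp ((n:ℝ) * s) * Real.cos (ℓ * s / (2 * π)) ^ 2) := by ring
    _ ≤ (2 * π / ℓ)^2 * max (Real.exp ((n:ℝ) * (-Y)) * Real.cos (ℓ * (-Y) / (2 * π)) ^ 2)
            (Real.exp ((n:ℝ) * Y) * Real.cos (ℓ * Y / (2 * π)) ^ 2) :=
        mul_le_mul_of_nonneg_left key hcoef
    _ = max (Real.exp ((n:ℝ) * (-Y)) * ((2 * π / ℓ)^2 * Real.cos (ℓ * (-Y) / (2 * π)) ^ 2))
            (Real.exp ((n:ℝ) * Y) * ((2 * π / ℓ)^2 * Real.cos (ℓ * Y / (2 * π)) ^ 2)) := by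
        rw [mul_max_of_nonneg _ _ hcoef]; ring_nf
end

section
/- There exists a universal constant C < ∞ such that for every 0 < δ < arsinh(1) and every 0 < ℓ ≤ 2δ one has X(ℓ) − X_δ(ℓ) ≥ π/δ − C. Consequently there exists δ₀ > 0 such that X(ℓ) − X_{δ₀}(ℓ) ≥ 1 for all 0 < ℓ ≤ 2δ₀; i.e. the δ-thin part of the collar is separated from the ends of the collar by a cylinder of definite length. -/
open Real Set

lemma aux_le_arcsin {x : ℝ} (h0 : 0 ≤ x) (h1 : x ≤ 1) : x ≤ Real.arcsin x := by
  have h := Real.sin_le (Real.arcsin_nonneg.2 h0)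
  rwa [Real.sin_arcsin (by linarith) h1] at h

lemma aux_arctan_le {x : ℝ} (h0 : 0 ≤ x) : Real.arctan x ≤ x := by
  have hn : 0 ≤ Real.arctan x := by
    rw [← Real.arctan_zero]
    exact Real.arctan_strictMono.monotone h0
  have h := Real.le_tan hn (Real.arctan_lt_pi_div_two x)
  rwa [Real.tan_arctan] at h

lemma aux_sinh_bound {δ : ℝ} (h0 : 0 < δ) (h1 : δ < 1) : Real.sinh δ * (1 - δ) ≤ δ := by
  have hf : 1 - δ ≤ Real.exp (-δ) := by
    have := Real.add_one_le_exp (-δ); linarith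
  have hef : Real.exp δ * Real.exp (-δ) = 1 := by
    rw [← Real.exp_add]; simp
  have hfpos : 0 < Real.exp (-δ) := Real.exp_pos _
  rw [Real.sinh_eq]
  nlinarith [sq_nonneg (Real.exp (-δ) - (1 - δ)), Real.exp_pos δ]

lemma aux_main {δ ℓ : ℝ} (hδ : 0 < δ) (hδ1 : δ < Real.arsinh 1) (hℓ : 0 < ℓ)
    (hle : ℓ ≤ 2 * δ) : π / δ - 2 * π ≤ collarX ℓ - collarXdelta δ ℓ := by
  set s := Real.sinh (ℓ / 2) with hs_def
  set t := Real.sinh δ with ht_def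
  have hδ1' : δ < 1 := by
    have h1 : Real.arsinh 1 < Real.arsinh (Real.sinh 1) := by
      rw [Real.arsinh_lt_arsinh]
      exact Real.self_lt_sinh_iff.2 one_pos
    rw [Real.arsinh_sinh] at h1
    linarith
  have hspos : 0 < s := Real.sinh_pos_iff.2 (by linarith)
  have htpos : 0 < t := Real.sinh_pos_iff.2 hδ
  have ht1 : t < 1 := by
    have : Real.sinh δ < Real.sinh (Real.arsinh 1) := Real.sinh_lt_sinh.2 hδ1
    rwa [Real.sinh_arsinh] at this
  have hst : s ≤ t := Real.sinh_le_sinh.2 (by linarith)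
  have hdiv1 : s / t ≤ 1 := by
    rw [div_le_one htpos]; exact hst
  have hdiv0 : 0 ≤ s / t := by positivity
  -- rewrite the difference
  have hXd : collarXdelta δ ℓ =
      (2 * π / ℓ) * (π / 2 - Real.arcsin (s / t)) := by
    rw [collarXdelta, if_pos hst]
  have hdiff : collarX ℓ - collarXdelta δ ℓ =
      (2 * π / ℓ) * (Real.arcsin (s / t) - Real.arctan s) := by
    rw [collarX, hXd]; ring
  rw [hdiff]
  -- lower bound for the bracket
  have h1 : s / t - s ≤ Real.arcsin (s / t) - Real.arctan s := by
    have := aux_le_arcsin hdiv0 hdiv1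
    have := aux_arctan_le hspos.le
    linarith
  have hfac : 0 < 2 * π / ℓ := by positivity
  have h2 : (2 * π / ℓ) * (s / t - s) ≤ (2 * π / ℓ) * (Real.arcsin (s / t) - Real.arctan s) :=
    mul_le_mul_of_nonneg_left h1 hfac.le
  refine le_trans ?_ h2
  -- (2π/ℓ) * (s/t - s) = (2π s/ℓ) * (1/t - 1) ≥ π (1/t - 1)
  have hsl : ℓ / 2 ≤ s := (Real.self_lt_sinh_iff.2 (by linarith)).le
  have h3 : π * (1 / t - 1) ≤ (2 * π / ℓ) * (s / t - s) := by
    have heq : (2 * π / ℓ) * (s / t - s) = (2 * π * s / ℓ) * (1 / t - 1) := by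
      field_simp
    rw [heq]
    have hπs : π ≤ 2 * π * s / ℓ := by
      rw [le_div_iff₀ hℓ]
      nlinarith [Real.pi_pos]
    have hpos : 0 ≤ 1 / t - 1 := by
      have : 1 / t ≥ 1 := (le_div_iff₀ htpos).2 (by linarith)
      linarith
    nlinarith [Real.pi_pos]
  refine le_trans ?_ h3
  -- π/δ - 2π ≤ π(1/t - 1), i.e. 1/δ - 1/t ≤ 1, i.e. t(1-δ) ≤ δ
  have hb := aux_sinh_bound hδ hδ1'
  have key : 1 / δ - 1 / t ≤ 1 := by
    rw [div_sub_div _ _ (ne_of_gt hδ) (ne_of_gt htpos), div_le_one (by positivity)]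
    nlinarith
  have h5 := mul_le_mul_of_nonneg_left key Real.pi_pos.le
  have e1 : π * (1 / δ - 1 / t) = π / δ - π * (1 / t) := by ring
  have e2 : π * (1 / t - 1) = π * (1 / t) - π := by ring
  linarith

/-- `X(ℓ) - X_δ(ℓ) ≥ π/δ - C` for a universal constant `C`; consequently there is `δ₀ > 0`
with `X(ℓ) - X_{δ₀}(ℓ) ≥ 1` for all `0 < ℓ ≤ 2δ₀`. -/
theorem thin_part_away_from_collar_ends :
    (∃ C : ℝ, 0 < C ∧ ∀ δ ℓ : ℝ, 0 < δ → δ < Real.arsinh 1 → 0 < ℓ → ℓ ≤ 2 * δ →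
        π / δ - C ≤ collarX ℓ - collarXdelta δ ℓ) ∧
    (∃ δ₀ : ℝ, 0 < δ₀ ∧ δ₀ < Real.arsinh 1 ∧ ∀ ℓ : ℝ, 0 < ℓ → ℓ ≤ 2 * δ₀ →
        1 ≤ collarX ℓ - collarXdelta δ₀ ℓ) := by
  have harsinh : (2:ℝ)/5 < Real.arsinh 1 := by
    rw [show (2:ℝ)/5 = Real.arsinh (Real.sinh (2/5)) from (Real.arsinh_sinh _).symm]
    rw [Real.arsinh_lt_arsinh]
    have ha : Real.exp (1/2) ^ 2 = Real.exp 1 := by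
      rw [← Real.exp_nat_mul]; norm_num
    have hb : Real.exp (1/2) < 1.65 := by
      nlinarith [Real.exp_one_lt_d9, Real.exp_pos (1/2)]
    have hc : Real.exp (2/5) ≤ Real.exp (1/2) := Real.exp_le_exp.2 (by norm_num)
    rw [Real.sinh_eq]
    have hd : 0 < Real.exp (-(2/5)) := Real.exp_pos _
    nlinarith
  constructor
  · exact ⟨2 * π, by positivity, fun δ ℓ h1 h2 h3 h4 => aux_main h1 h2 h3 h4⟩
  · refine ⟨2/5, by norm_num, harsinh, fun ℓ hℓ hle => ?_⟩
    have hm := aux_main (by norm_num : (0:ℝ) < 2/5) harsinh hℓ hle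
    have hpi : 3 < π := Real.pi_gt_three
    have e1 : π / (2/5) - 2 * π = π / 2 := by ring
    linarith
end

section
/- For every 0 < ℓ ≤ 2·arsinh(1), the total area of the hyperbolic collar C(ℓ) satisfies Area(C(ℓ)) = ∫₀^{2π}∫_{−X(ℓ)}^{X(ℓ)} ρ_ℓ(s)² ds dθ = 2ℓ·tan(ℓ·X(ℓ)/(2π)) = 2ℓ/sinh(ℓ/2) ≤ 4. -/
open Real Set MeasureTheory

/-- The total area of the hyperbolic collar `C(ℓ)` equals
`2ℓ tan(ℓX(ℓ)/(2π)) = 2ℓ/sinh(ℓ/2) ≤ 4`. -/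
theorem area_collar (ℓ : ℝ) (h1 : 0 < ℓ) (h2 : ℓ ≤ 2 * Real.arsinh 1) :
    (∫ θ in (0:ℝ)..(2 * π), ∫ s in (-(collarX ℓ))..(collarX ℓ), (collarRho ℓ s) ^ 2)
      = 2 * ℓ * Real.tan (ℓ * collarX ℓ / (2 * π)) ∧
    2 * ℓ * Real.tan (ℓ * collarX ℓ / (2 * π)) = 2 * ℓ / Real.sinh (ℓ / 2) ∧
    2 * ℓ / Real.sinh (ℓ / 2) ≤ 4 := by
  have hπ := Real.pi_pos
  have hℓ := h1.ne'
  have hsp : 0 < Real.sinh (ℓ / 2) := Real.sinh_pos_iff.2 (by linarith)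
  set a : ℝ := ℓ / (2 * π) with ha
  have ha0 : 0 < a := div_pos h1 (by linarith)
  set b : ℝ := π / 2 - Real.arctan (Real.sinh (ℓ / 2)) with hbdef
  clear_value a b
  have hblt : b < π / 2 := by
    have : Real.arctan 0 < Real.arctan (Real.sinh (ℓ/2)) := Real.arctan_strictMono hsp
    rw [Real.arctan_zero] at this; simp [hbdef]; linarith
  have hbpos : 0 < b := by
    have := Real.arctan_lt_pi_div_two (Real.sinh (ℓ / 2)); simp [hbdef]; linarith
  have haX : a * collarX ℓ = b := by
    rw [ha, hbdef, collarX]; field_simp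
  have hXpos : 0 < collarX ℓ := by
    nlinarith [mul_pos ha0 hbpos]
  have harg : ℓ * collarX ℓ / (2 * π) = b := by rw [← haX, ha]; ring
  -- cos positivity on the interval
  have hcos : ∀ s ∈ Set.uIcc (-(collarX ℓ)) (collarX ℓ), 0 < Real.cos (a * s) := by
    intro s hs
    rw [Set.uIcc_of_le (by linarith)] at hs
    apply Real.cos_pos_of_mem_Ioo
    constructor
    · have h3 : a * (-(collarX ℓ)) ≤ a * s :=
        mul_le_mul_of_nonneg_left hs.1 ha0.le
      have h4 : a * (-(collarX ℓ)) = -b := by rw [← haX]; ring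
      have h5 : -b ≤ a * s := by rw [← h4]; exact h3
      linarith
    · have h3 : a * s ≤ a * collarX ℓ := mul_le_mul_of_nonneg_left hs.2 ha0.le
      have h5 : a * s ≤ b := by rw [← haX]; exact h3
      linarith
  have hrho : ∀ s, collarRho ℓ s ^ 2 = a ^ 2 * (1 / Real.cos (a * s) ^ 2) := by
    intro s
    have : ℓ * s / (2 * π) = a * s := by rw [ha]; ring
    have e : ℓ / (2 * π * Real.cos (a * s)) = a / Real.cos (a * s) := by
      rw [ha, div_div]
    rw [collarRho, this, e, div_pow, ← mul_one_div]
  -- inner integral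
  have hinner : (∫ s in (-(collarX ℓ))..(collarX ℓ), (collarRho ℓ s) ^ 2)
      = 2 * a * Real.tan b := by
    have hderiv : ∀ s ∈ Set.uIcc (-(collarX ℓ)) (collarX ℓ),
        HasDerivAt (fun t => a * Real.tan (a * t)) ((collarRho ℓ s) ^ 2) s := by
      intro s hs
      have hc := (hcos s hs).ne'
      have h1 : HasDerivAt (fun t : ℝ => a * t) a s := by
        simpa using (hasDerivAt_id s).const_mul a
      have h2 := (Real.hasDerivAt_tan hc).comp s h1
      have h3 := h2.const_mul a
      rw [show collarRho ℓ s ^ 2 = a * (1 / Real.cos (a * s) ^ 2 * a) by rw [hrho s]; ring]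
      exact h3
    have hcont : IntervalIntegrable (fun s => (collarRho ℓ s) ^ 2) volume
        (-(collarX ℓ)) (collarX ℓ) := by
      apply ContinuousOn.intervalIntegrable
      have : ContinuousOn (fun s => a ^ 2 * (1 / Real.cos (a * s) ^ 2))
          (Set.uIcc (-(collarX ℓ)) (collarX ℓ)) := by
        apply ContinuousOn.mul continuousOn_const
        apply ContinuousOn.div continuousOn_const
        · exact ((Real.continuous_cos.comp (continuous_const.mul continuous_id)).pow 2).continuousOn
        · intro s hs
          exact pow_ne_zero 2 (hcos s hs).ne'
      exact this.congr (fun s _ => hrho s)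
    rw [intervalIntegral.integral_eq_sub_of_hasDerivAt hderiv hcont]
    have hneg : a * (-(collarX ℓ)) = -b := by rw [← haX]; ring
    rw [haX, hneg, Real.tan_neg]
    ring
  have htan : Real.tan b = (Real.sinh (ℓ / 2))⁻¹ := by
    rw [hbdef, Real.tan_pi_div_two_sub, Real.tan_arctan]
  refine ⟨?_, ?_, ?_⟩
  · rw [hinner, intervalIntegral.integral_const, harg, smul_eq_mul, ha]
    field_simp
    ring
  · rw [harg, htan]; ring
  · rw [div_le_iff₀ hsp]
    have hx : ℓ / 2 ≤ Real.sinh (ℓ / 2) :=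
      Real.self_le_sinh_iff.2 (by linarith)
    nlinarith
end

section
/- Let φ be a holomorphic function on the punctured unit disc {z ∈ ℂ : 0 < |z| < 1}. Then the following three statements are equivalent: (i) ∫_{0 < |z| < 1/2} |φ(z)| dA(z) < ∞, where dA is the Lebesgue area measure on ℂ; (ii) sup_{0 < |z| < 1/2} |φ(z)|·|z|²·(log|z|)² < ∞; (iii) the function z ↦ z·φ(z) extends to a holomorphic function on the unit disc {|z| < 1}, i.e. φ has at worst a simple pole at 0. -/
open Real MeasureTheory Complex Set Filter Metric
open scoped ENNReal Topology


theorem lintegral_comp_polarCoord_symm' (g : ℝ × ℝ → ℝ≥0∞) :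
    ∫⁻ p in polarCoord.target, ENNReal.ofReal p.1 * g (polarCoord.symm p) = ∫⁻ p, g p := by
  set B : ℝ × ℝ → ℝ × ℝ →L[ℝ] ℝ × ℝ := fun p =>
    LinearMap.toContinuousLinearMap (Matrix.toLin (Module.Basis.finTwoProd ℝ) (Module.Basis.finTwoProd ℝ)
      !![Real.cos p.2, -p.1 * Real.sin p.2; Real.sin p.2, p.1 * Real.cos p.2])
  have B_det : ∀ p, (B p).det = p.1 := by
    intro p
    conv_rhs => rw [← one_mul p.1, ← Real.cos_sq_add_sin_sq p.2]
    simp only [B, neg_mul, LinearMap.det_toContinuousLinearMap, LinearMap.det_toLin,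
      Matrix.det_fin_two_of, sub_neg_eq_add]
    ring
  have hinj : Set.InjOn polarCoord.symm polarCoord.target := by
    have := polarCoord.symm.injOn
    rwa [OpenPartialHomeomorph.symm_source] at this
  calc ∫⁻ p in polarCoord.target, ENNReal.ofReal p.1 * g (polarCoord.symm p)
      = ∫⁻ p in polarCoord.target, ENNReal.ofReal |(B p).det| * g (polarCoord.symm p) := by
        refine setLIntegral_congr_fun polarCoord.open_target.measurableSet
          (fun p hp => ?_)
        rw [B_det, abs_of_pos hp.1]
    _ = ∫⁻ p in polarCoord.symm '' polarCoord.target, g p :=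
        (lintegral_image_eq_lintegral_abs_det_fderiv_mul volume
          polarCoord.open_target.measurableSet
          (fun p _ => (hasFDerivAt_polarCoord_symm p).hasFDerivWithinAt) hinj g).symm
    _ = ∫⁻ p in polarCoord.source, g p := by rw [polarCoord.symm_image_target_eq_source]
    _ = ∫⁻ p, g p := by
        rw [Measure.restrict_congr_set polarCoord_source_ae_eq_univ, Measure.restrict_univ]

theorem lintegral_complex_polar (g : ℂ → ℝ≥0∞) :
    ∫⁻ p in polarCoord.target, ENNReal.ofReal p.1 * g (Complex.polarCoord.symm p) = ∫⁻ z, g z := by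
  have h := lintegral_comp_polarCoord_symm' (fun p => g (Complex.measurableEquivRealProd.symm p))
  rw [(Complex.volume_preserving_equiv_real_prod.symm).lintegral_comp_emb
    Complex.measurableEquivRealProd.symm.measurableEmbedding] at h
  exact h

theorem circle_avg {f : ℂ → ℂ} {c : ℂ} {R : ℝ} (hR : 0 < R)
    (hc : ContinuousOn f (closedBall c R)) (hd : ∀ x ∈ ball c R, DifferentiableAt ℂ f x) :
    2 * π * ‖f c‖ ≤ ∫ θ in (0:ℝ)..(2*π), ‖f (circleMap c R θ)‖ := by
  have h0 : ((2 * ↑π * I : ℂ))⁻¹ • (∮ z in C(c, R), (z - c)⁻¹ • f z) = f c :=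
    Complex.two_pi_I_inv_smul_circleIntegral_sub_inv_smul_of_differentiable_on_off_countable
      Set.countable_empty (mem_ball_self hR) hc (fun x hx => hd x hx.1)
  have h1 : (∮ z in C(c, R), (z - c)⁻¹ • f z) = I * ∫ θ in (0:ℝ)..(2*π), f (circleMap c R θ) := by
    rw [circleIntegral, ← intervalIntegral.integral_const_mul]
    refine intervalIntegral.integral_congr fun θ _ => ?_
    have hne : circleMap 0 R θ ≠ 0 := circleMap_ne_center hR.ne'
    simp only [deriv_circleMap, circleMap_sub_center, smul_eq_mul]
    field_simp
  have h2 : ‖f c‖ = (2*π)⁻¹ * ‖∫ θ in (0:ℝ)..(2*π), f (circleMap c R θ)‖ := by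
    rw [← h0, h1, smul_eq_mul]
    rw [norm_mul, norm_mul, norm_inv, norm_mul, norm_mul, Complex.norm_I]
    simp [Complex.norm_real, abs_of_pos pi_pos, Complex.norm_ofNat]
  have h3 : ‖∫ θ in (0:ℝ)..(2*π), f (circleMap c R θ)‖
      ≤ ∫ θ in (0:ℝ)..(2*π), ‖f (circleMap c R θ)‖ :=
    intervalIntegral.norm_integral_le_integral_norm (by positivity)
  rw [h2] at *
  have hπ : (0:ℝ) < 2*π := by positivity
  calc 2*π*((2*π)⁻¹ * ‖∫ θ in (0:ℝ)..(2*π), f (circleMap c R θ)‖)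
      = ‖∫ θ in (0:ℝ)..(2*π), f (circleMap c R θ)‖ := by field_simp
    _ ≤ _ := h3

theorem circle_avg_lintegral {f : ℂ → ℂ} {c : ℂ} {R : ℝ} (hR : 0 < R)
    (hc : ContinuousOn f (closedBall c R)) (hd : ∀ x ∈ ball c R, DifferentiableAt ℂ f x) :
    ENNReal.ofReal (2 * π * ‖f c‖) ≤ ∫⁻ θ in Ioo (-π) π, ENNReal.ofReal ‖f (circleMap c R θ)‖ := by
  have hcont : Continuous fun θ => ‖f (circleMap c R θ)‖ := by
    rw [← continuousOn_univ]
    exact ((hc.comp (continuous_circleMap c R).continuousOn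
      (fun θ _ => circleMap_mem_closedBall c hR.le θ)).norm)
  have hper : Function.Periodic (fun θ => ‖f (circleMap c R θ)‖) (2*π) := fun θ => by
    simp [periodic_circleMap c R θ]
  have step1 : ∫ θ in (0:ℝ)..(2*π), ‖f (circleMap c R θ)‖
      = ∫ θ in (-π)..(π), ‖f (circleMap c R θ)‖ := by
    have := hper.intervalIntegral_add_eq (0:ℝ) (-π)
    rw [zero_add] at this
    rw [this]
    congr 1
    ring
  have step2 : ∫ θ in (-π)..(π), ‖f (circleMap c R θ)‖
      = ∫ θ in Ioo (-π) π, ‖f (circleMap c R θ)‖ := by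
    rw [intervalIntegral.integral_of_le (by linarith [pi_pos]), integral_Ioc_eq_integral_Ioo]
  have hInt : IntegrableOn (fun θ => ‖f (circleMap c R θ)‖) (Ioo (-π) π) :=
    (hcont.integrableOn_Icc (a := -π) (b := π)).mono_set Ioo_subset_Icc_self
  calc ENNReal.ofReal (2 * π * ‖f c‖)
      ≤ ENNReal.ofReal (∫ θ in Ioo (-π) π, ‖f (circleMap c R θ)‖) := by
        refine ENNReal.ofReal_le_ofReal ?_
        rw [← step2, ← step1]; exact circle_avg hR hc hd
    _ = ∫⁻ θ in Ioo (-π) π, ENNReal.ofReal ‖f (circleMap c R θ)‖ :=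
        ofReal_integral_eq_lintegral_ofReal hInt (ae_of_all _ fun θ => norm_nonneg _)

theorem isOpen_punctured : IsOpen {z : ℂ | ‖z‖ < 1 ∧ z ≠ 0} := by
  have : {z : ℂ | ‖z‖ < 1 ∧ z ≠ 0}
      = ((fun z : ℂ => ‖z‖) ⁻¹' Iio 1) ∩ {(0:ℂ)}ᶜ := by
    ext w; simp [and_comm]
  rw [this]
  exact (isOpen_Iio.preimage continuous_norm).inter isOpen_compl_singleton

theorem area_bound {φ : ℂ → ℂ}
    (hφ : DifferentiableOn ℂ φ {z : ℂ | ‖z‖ < 1 ∧ z ≠ 0})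
    {z : ℂ} (hz0 : z ≠ 0) (hz : ‖z‖ < 1/4) :
    ENNReal.ofReal (π * (‖z‖ / 2)^2 * ‖φ z‖)
      ≤ ∫⁻ w in {w : ℂ | w ≠ 0 ∧ ‖w‖ ≤ 3/2 * ‖z‖},
          ENNReal.ofReal ‖φ w‖ := by
  set U : Set ℂ := {z : ℂ | ‖z‖ < 1 ∧ z ≠ 0} with hUdef
  set r : ℝ := ‖z‖ / 2 with hrdef
  have habs : 0 < ‖z‖ := by simpa [norm_pos_iff] using hz0
  have hr : 0 < r := by positivity
  -- closed ball is inside the punctured disc and inside the small annulus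
  have hub : ∀ w ∈ closedBall z r, ‖w‖ ≤ 3/2 * ‖z‖ := by
    intro w hw
    rw [mem_closedBall, Complex.dist_eq] at hw
    have h1 : ‖w‖ ≤ ‖z‖ + r := by
      calc ‖w‖ = ‖z + (w - z)‖ := by congr 1; ring
        _ ≤ ‖z‖ + ‖w - z‖ := norm_add_le _ _
        _ ≤ ‖z‖ + r := by linarith
    rw [hrdef] at h1; linarith
  have hlb : ∀ w ∈ closedBall z r, w ≠ 0 := by
    intro w hw h0
    rw [mem_closedBall, Complex.dist_eq, h0, zero_sub, norm_neg] at hw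
    rw [hrdef] at hw; linarith
  have hball_sub : closedBall z r ⊆ U := by
    intro w hw
    refine ⟨?_, hlb w hw⟩
    have := hub w hw
    linarith
  have hballD : closedBall z r ⊆ {w : ℂ | w ≠ 0 ∧ ‖w‖ ≤ 3/2 * ‖z‖} :=
    fun w hw => ⟨hlb w hw, hub w hw⟩
  set G : ℂ → ℝ≥0∞ := (closedBall z r).indicator (fun w => ENNReal.ofReal ‖φ w‖) with hGdef
  set S' : Set (ℝ × ℝ) := Ioc 0 r ×ˢ Ioo (-π) π with hS'def
  set F : ℝ × ℝ → ℝ≥0∞ := fun p => ENNReal.ofReal (p.1 * ‖φ (circleMap z p.1 p.2)‖) with hFdef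
  have hS'm : MeasurableSet S' := measurableSet_Ioc.prod measurableSet_Ioo
  set K : ℝ≥0∞ := ENNReal.ofReal (2 * π * ‖φ z‖) with hKdef
  -- step A : the F-integral is at least π r² ‖φ z‖
  have hcircmem : ∀ ρ, 0 < ρ → ρ ≤ r → ∀ θ : ℝ, circleMap z ρ θ ∈ closedBall z r := by
    intro ρ hρ0 hρr θ
    rw [mem_closedBall, Complex.dist_eq, circleMap_sub_center]
    have : ‖circleMap 0 ρ θ‖ = |ρ| := norm_circleMap_zero ρ θ
    rw [this, abs_of_pos hρ0]; exact hρr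
  have inner : ∀ ρ ∈ Ioc (0:ℝ) r,
      ENNReal.ofReal ρ * K ≤ ∫⁻ θ in Ioo (-π) π, F (ρ, θ) := by
    intro ρ hρ
    have hcball : closedBall z ρ ⊆ closedBall z r := closedBall_subset_closedBall hρ.2
    have hcont : ContinuousOn φ (closedBall z ρ) :=
      hφ.continuousOn.mono (hcball.trans hball_sub)
    have hdiff : ∀ x ∈ ball z ρ, DifferentiableAt ℂ φ x := fun x hx =>
      hφ.differentiableAt (isOpen_punctured.mem_nhds
        (hball_sub (hcball (ball_subset_closedBall hx))))
    calc ENNReal.ofReal ρ * K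
        ≤ ENNReal.ofReal ρ * ∫⁻ θ in Ioo (-π) π, ENNReal.ofReal ‖φ (circleMap z ρ θ)‖ :=
          mul_le_mul_right (circle_avg_lintegral hρ.1 hcont hdiff) _
      _ = ∫⁻ θ in Ioo (-π) π, ENNReal.ofReal ρ * ENNReal.ofReal ‖φ (circleMap z ρ θ)‖ :=
          (lintegral_const_mul' _ _ ENNReal.ofReal_ne_top).symm
      _ = ∫⁻ θ in Ioo (-π) π, F (ρ, θ) := by
          refine lintegral_congr fun θ => ?_
          rw [hFdef]; dsimp only
          rw [← ENNReal.ofReal_mul hρ.1.le]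
  have hprodint : ∫⁻ p in S', F p = ∫⁻ ρ in Ioc (0:ℝ) r, ∫⁻ θ in Ioo (-π) π, F (ρ, θ) := by
    have hFcont : ContinuousOn F S' := by
      have hcirc : Continuous fun p : ℝ × ℝ => circleMap z p.1 p.2 := by
        simp only [circleMap]
        fun_prop
    -- continuity of F on S'
      have hmaps : MapsTo (fun p : ℝ × ℝ => circleMap z p.1 p.2) S' U := by
        intro p hp
        exact hball_sub (hcircmem p.1 hp.1.1 hp.1.2 p.2)
      refine ENNReal.continuous_ofReal.comp_continuousOn ?_
      exact (continuousOn_fst.mul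
        ((hφ.continuousOn.comp hcirc.continuousOn hmaps).norm))
    have hFae : AEMeasurable F ((volume.restrict (Ioc (0:ℝ) r)).prod
        (volume.restrict (Ioo (-π) π))) := by
      rw [Measure.prod_restrict, ← Measure.volume_eq_prod]
      exact hFcont.aemeasurable hS'm
    rw [hS'def, Measure.volume_eq_prod, ← Measure.prod_restrict]
    exact lintegral_prod F hFae
  have hIocInt : ∫⁻ ρ in Ioc (0:ℝ) r, ENNReal.ofReal ρ = ENNReal.ofReal (r^2/2) := by
    have hint : IntegrableOn (fun ρ : ℝ => ρ) (Ioc 0 r) :=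
      (continuous_id.integrableOn_Icc (a := 0) (b := r)).mono_set Ioc_subset_Icc_self
    have hnn : 0 ≤ᵐ[volume.restrict (Ioc (0:ℝ) r)] fun ρ : ℝ => ρ :=
      (ae_restrict_iff' measurableSet_Ioc).2 (ae_of_all _ fun ρ hρ => hρ.1.le)
    rw [← ofReal_integral_eq_lintegral_ofReal hint hnn]
    congr 1
    rw [← intervalIntegral.integral_of_le hr.le, integral_id]
    ring
  have stepA : ENNReal.ofReal (π * r^2 * ‖φ z‖) ≤ ∫⁻ p in S', F p := by
    calc ENNReal.ofReal (π * r^2 * ‖φ z‖)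
        = K * ENNReal.ofReal (r^2/2) := by
          rw [hKdef, ← ENNReal.ofReal_mul (by positivity)]
          congr 1; ring
      _ = ∫⁻ ρ in Ioc (0:ℝ) r, K * ENNReal.ofReal ρ := by
          rw [lintegral_const_mul' _ _ ENNReal.ofReal_ne_top, hIocInt]
      _ = ∫⁻ ρ in Ioc (0:ℝ) r, ENNReal.ofReal ρ * K := by
          simp_rw [mul_comm]
      _ ≤ ∫⁻ ρ in Ioc (0:ℝ) r, ∫⁻ θ in Ioo (-π) π, F (ρ, θ) :=
          setLIntegral_mono' measurableSet_Ioc inner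
      _ = ∫⁻ p in S', F p := hprodint.symm
  -- step B : pass to the polar integral of G
  have hS'sub : S' ⊆ polarCoord.target := by
    rw [hS'def, polarCoord_target]
    exact Set.prod_mono Ioc_subset_Ioi_self (subset_refl _)
  have stepB : ∫⁻ p in S', F p
      ≤ ∫⁻ p in polarCoord.target, ENNReal.ofReal p.1 * G (z + Complex.polarCoord.symm p) := by
    have key : ∀ p ∈ S', F p = ENNReal.ofReal p.1 * G (z + Complex.polarCoord.symm p) := by
      intro p hp
      obtain ⟨hp1, hp2⟩ := hp
      have habs' : ‖Complex.polarCoord.symm p‖ = p.1 := by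
        rw [Complex.norm_polarCoord_symm, abs_of_pos hp1.1]
      have hmem : z + Complex.polarCoord.symm p ∈ closedBall z r := by
        rw [mem_closedBall, Complex.dist_eq, add_sub_cancel_left, habs']
        exact hp1.2
      have hcm : z + Complex.polarCoord.symm p = circleMap z p.1 p.2 := by
        rw [Complex.polarCoord_symm_apply, circleMap, Complex.exp_mul_I]
        push_cast
        ring
      rw [hGdef, Set.indicator_of_mem hmem, hcm, hFdef]
      dsimp only
      rw [← ENNReal.ofReal_mul hp1.1.le]
    calc ∫⁻ p in S', F p
        = ∫⁻ p in S', ENNReal.ofReal p.1 * G (z + Complex.polarCoord.symm p) :=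
          setLIntegral_congr_fun hS'm key
      _ ≤ _ := lintegral_mono_set hS'sub
  -- step C-F : polar change of variables, translation invariance, and monotonicity
  have stepC : ∫⁻ p in polarCoord.target, ENNReal.ofReal p.1 * G (z + Complex.polarCoord.symm p)
      = ∫⁻ w, G (z + w) := lintegral_complex_polar (fun w => G (z + w))
  have stepD : ∫⁻ w, G (z + w) = ∫⁻ w, G w := lintegral_add_left_eq_self G z
  have stepE : ∫⁻ w, G w = ∫⁻ w in closedBall z r, ENNReal.ofReal ‖φ w‖ := by
    rw [hGdef, lintegral_indicator measurableSet_closedBall]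
  calc ENNReal.ofReal (π * (‖z‖ / 2)^2 * ‖φ z‖)
      ≤ ∫⁻ p in S', F p := stepA
    _ ≤ _ := stepB
    _ = ∫⁻ w, G (z + w) := stepC
    _ = ∫⁻ w, G w := stepD
    _ = ∫⁻ w in closedBall z r, ENNReal.ofReal ‖φ w‖ := stepE
    _ ≤ _ := lintegral_mono_set hballD

theorem tendsto_of_integrable {φ : ℂ → ℂ}
    (hφ : DifferentiableOn ℂ φ {z : ℂ | ‖z‖ < 1 ∧ z ≠ 0})
    (hint : IntegrableOn φ {z : ℂ | ‖z‖ < 1 / 2 ∧ z ≠ 0}) :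
    Tendsto (fun z => ‖z‖ ^ 2 * ‖φ z‖) (𝓝[≠] (0:ℂ)) (𝓝 0) := by
  set U₀ : Set ℂ := {z : ℂ | ‖z‖ < 1 / 2 ∧ z ≠ 0} with hU₀def
  have hU₀m : MeasurableSet U₀ := by
    have : U₀ = ((fun z : ℂ => ‖z‖) ⁻¹' Iio (1/2)) ∩ {(0:ℂ)}ᶜ := by ext w; simp [hU₀def, and_comm]
    rw [this]
    exact (((isOpen_Iio.preimage continuous_norm).inter
      isOpen_compl_singleton)).measurableSet
  -- a measurable version of the density
  have hφae : AEMeasurable (fun w => ENNReal.ofReal ‖φ w‖) (volume.restrict U₀) := by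
    have hc : ContinuousOn (fun w => ENNReal.ofReal ‖φ w‖) U₀ := by
      refine ENNReal.continuous_ofReal.comp_continuousOn ?_
      refine ContinuousOn.norm (hφ.continuousOn.mono ?_)
      intro w hw; exact ⟨by rw [hU₀def] at hw; linarith [hw.1], hw.2⟩
    exact hc.aemeasurable hU₀m
  obtain ⟨g₀, hg₀m, hg₀ae⟩ := hφae
  set ν : Measure ℂ := volume.withDensity (U₀.indicator g₀) with hνdef
  have hνapp : ∀ s : Set ℂ, MeasurableSet s → s ⊆ U₀ →
      ν s = ∫⁻ w in s, ENNReal.ofReal ‖φ w‖ := by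
    intro s hsm hs
    rw [hνdef, withDensity_apply _ hsm]
    calc ∫⁻ w in s, U₀.indicator g₀ w
        = ∫⁻ w in s, g₀ w :=
          setLIntegral_congr_fun hsm (fun w hw => indicator_of_mem (hs hw) _)
      _ = ∫⁻ w in s, ENNReal.ofReal ‖φ w‖ := by
          refine lintegral_congr_ae ?_
          exact (ae_restrict_of_ae_restrict_of_subset hs hg₀ae.symm)
  have hνfin : ν univ ≠ ⊤ := by
    rw [hνdef, withDensity_apply _ MeasurableSet.univ, Measure.restrict_univ,
      lintegral_indicator hU₀m]
    have h1 : ∫⁻ w in U₀, g₀ w = ∫⁻ w in U₀, ENNReal.ofReal ‖φ w‖ :=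
      lintegral_congr_ae hg₀ae.symm
    rw [h1]
    have h2 := hint.2
    rw [hasFiniteIntegral_iff_norm] at h2
    simpa using h2.ne
  -- shrinking annuli
  set s : ℕ → Set ℂ := fun n => {w : ℂ | w ≠ 0 ∧ ‖w‖ ≤ 1/(n+1)} with hsdef
  have hsm : ∀ n, MeasurableSet (s n) := by
    intro n
    have : s n = {(0:ℂ)}ᶜ ∩ (fun z : ℂ => ‖z‖) ⁻¹' Iic (1/(n+1)) := by ext w; simp [hsdef]
    rw [this]
    exact (isOpen_compl_singleton.measurableSet).inter
      ((isClosed_Iic.preimage continuous_norm).measurableSet)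
  have hanti : Antitone s := by
    intro m n hmn w hw
    refine ⟨hw.1, le_trans hw.2 ?_⟩
    have : (m:ℝ)+1 ≤ (n:ℝ)+1 := by exact_mod_cast by omega
    exact one_div_le_one_div_of_le (by positivity) this
  have hiInter : ⋂ n, s n = ∅ := by
    ext w
    simp only [mem_iInter, mem_empty_iff_false, iff_false]
    intro h
    have hw0 : w ≠ 0 := (h 0).1
    have habs : 0 < ‖w‖ := by simpa [norm_pos_iff] using hw0
    obtain ⟨n, hn⟩ := exists_nat_one_div_lt habs
    exact absurd ((h n).2) (not_le.mpr hn)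
  have htendν : Tendsto (fun n => ν (s n)) atTop (𝓝 0) := by
    have := tendsto_measure_iInter_atTop (μ := ν) (fun n => (hsm n).nullMeasurableSet)
      hanti ⟨0, ne_top_of_le_ne_top hνfin (measure_mono (subset_univ _))⟩
    rwa [hiInter, measure_empty] at this
  -- now the squeeze
  rw [Metric.tendsto_nhds]
  intro ε hε
  have hε8 : (0:ℝ≥0∞) < ENNReal.ofReal (π * ε / 8) := by
    rw [ENNReal.ofReal_pos]; positivity
  obtain ⟨n, hn⟩ : ∃ n, ν (s n) < ENNReal.ofReal (π * ε / 8) := by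
    have := (htendν.eventually (eventually_lt_nhds hε8)).exists
    simpa using this
  set δ : ℝ := min (1/4) (2/(3*(n+1))) with hδdef
  have hδpos : 0 < δ := by
    rw [hδdef]
    apply lt_min (by norm_num) (by positivity)
  have hmem : ∀ᶠ w in 𝓝[≠] (0:ℂ), ‖w‖ < δ ∧ w ≠ 0 := by
    have h1 : ∀ᶠ w in 𝓝 (0:ℂ), ‖w‖ < δ := by
      have := Metric.ball_mem_nhds (0:ℂ) hδpos
      refine eventually_of_mem this fun w hw => ?_
      simpa [Complex.dist_eq] using hw
    exact (eventually_nhdsWithin_of_eventually_nhds h1).and self_mem_nhdsWithin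
  refine hmem.mono ?_
  rintro w ⟨hwδ, hw0⟩
  have hw4 : ‖w‖ < 1/4 := lt_of_lt_of_le hwδ (min_le_left _ _)
  have hwn : 3/2 * ‖w‖ ≤ 1/(n+1) := by
    have h2 : ‖w‖ < 2/(3*(n+1)) := lt_of_lt_of_le hwδ (min_le_right _ _)
    have h3 : (0:ℝ) < 3*((n:ℝ)+1) := by positivity
    rw [lt_div_iff₀ h3] at h2
    rw [le_div_iff₀ (by positivity)]
    nlinarith
  have hsub : {v : ℂ | v ≠ 0 ∧ ‖v‖ ≤ 3/2 * ‖w‖} ⊆ s n := by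
    intro v hv
    exact ⟨hv.1, le_trans hv.2 hwn⟩
  have hsubU₀ : s n ⊆ U₀ ∨ True := Or.inr trivial
  -- set D := the annulus about w
  set D : Set ℂ := {v : ℂ | v ≠ 0 ∧ ‖v‖ ≤ 3/2 * ‖w‖} with hDdef
  have hDm : MeasurableSet D := by
    have : D = {(0:ℂ)}ᶜ ∩ (fun z : ℂ => ‖z‖) ⁻¹' Iic (3/2 * ‖w‖) := by ext v; simp [hDdef]
    rw [this]
    exact (isOpen_compl_singleton.measurableSet).inter
      ((isClosed_Iic.preimage continuous_norm).measurableSet)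
  have hDU₀ : D ⊆ U₀ := by
    intro v hv
    refine ⟨?_, hv.1⟩
    have := hv.2
    have habsw : ‖w‖ < 1/4 := hw4
    show ‖v‖ < 1/2
    nlinarith [norm_nonneg v]
  have key : ENNReal.ofReal (π * (‖w‖ / 2)^2 * ‖φ w‖) < ENNReal.ofReal (π * ε / 8) := by
    calc ENNReal.ofReal (π * (‖w‖ / 2)^2 * ‖φ w‖)
        ≤ ∫⁻ v in D, ENNReal.ofReal ‖φ v‖ := area_bound hφ hw0 hw4
      _ = ν D := (hνapp D hDm hDU₀).symm
      _ ≤ ν (s n) := measure_mono hsub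
      _ < _ := hn
  have key2 : π * (‖w‖ / 2)^2 * ‖φ w‖ < π * ε / 8 := by
    have := (ENNReal.ofReal_lt_ofReal_iff (by positivity)).mp key
    exact this
  have habsw : 0 < ‖w‖ := by simpa [norm_pos_iff] using hw0
  rw [Real.dist_eq, sub_zero]
  have hnn : 0 ≤ ‖w‖ ^ 2 * ‖φ w‖ := by positivity
  rw [_root_.abs_of_nonneg hnn]
  have hπ : (0:ℝ) < π := pi_pos
  nlinarith [norm_nonneg (φ w), sq_nonneg (‖w‖)]

theorem tendsto_of_bound {φ : ℂ → ℂ} {C : ℝ}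
    (hC : ∀ z : ℂ, z ≠ 0 → ‖z‖ < 1 / 2 →
      ‖φ z‖ * ‖z‖ ^ 2 * Real.log (‖z‖) ^ 2 ≤ C) :
    Tendsto (fun z => ‖z‖ ^ 2 * ‖φ z‖) (𝓝[≠] (0:ℂ)) (𝓝 0) := by
  have habs : Tendsto (fun z : ℂ => ‖z‖) (𝓝[≠] (0:ℂ)) (𝓝[>] 0) := by
    rw [tendsto_nhdsWithin_iff]
    constructor
    · have := (continuous_norm.tendsto 0).mono_left (nhdsWithin_le_nhds (s := {(0:ℂ)}ᶜ))
      simpa using this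
    · refine eventually_mem_nhdsWithin.mono fun z hz => ?_
      simpa [norm_pos_iff] using hz
  have hlog : Tendsto (fun z : ℂ => Real.log (‖z‖)) (𝓝[≠] (0:ℂ)) atBot :=
    Real.tendsto_log_nhdsGT_zero.comp habs
  have hneg : Tendsto (fun z : ℂ => -Real.log (‖z‖)) (𝓝[≠] (0:ℂ)) atTop :=
    tendsto_neg_atTop_iff.mpr hlog
  have hsq : Tendsto (fun z : ℂ => Real.log (‖z‖) ^ 2) (𝓝[≠] (0:ℂ)) atTop := by
    have h2 := (tendsto_pow_atTop (n := 2) two_ne_zero).comp hneg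
    refine h2.congr fun z => ?_
    simp [neg_sq]
  have hb : Tendsto (fun z : ℂ => C / Real.log (‖z‖) ^ 2) (𝓝[≠] (0:ℂ)) (𝓝 0) :=
    Tendsto.div_atTop tendsto_const_nhds hsq
  have hmem : ∀ᶠ z in 𝓝[≠] (0:ℂ), ‖z‖ < 1/2 ∧ z ≠ 0 := by
    have h1 : ∀ᶠ z in 𝓝 (0:ℂ), ‖z‖ < 1/2 := by
      have := Metric.ball_mem_nhds (0:ℂ) (by norm_num : (0:ℝ) < 1/2)
      refine eventually_of_mem this fun w hw => ?_
      simpa [Complex.dist_eq] using hw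
    exact (eventually_nhdsWithin_of_eventually_nhds h1).and self_mem_nhdsWithin
  refine squeeze_zero' ?_ ?_ hb
  · refine hmem.mono fun z _ => by positivity
  · refine hmem.mono ?_
    rintro z ⟨hz2, hz0⟩
    have habs0 : 0 < ‖z‖ := by simpa [norm_pos_iff] using hz0
    have hlt : Real.log (‖z‖) < 0 := Real.log_neg habs0 (by linarith)
    have hpos : 0 < Real.log (‖z‖) ^ 2 := by nlinarith
    rw [le_div_iff₀ hpos]
    have := hC z hz0 hz2
    nlinarith [this]

theorem extend_of_tendsto {φ : ℂ → ℂ}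
    (hφ : DifferentiableOn ℂ φ {z : ℂ | ‖z‖ < 1 ∧ z ≠ 0})
    (h : Tendsto (fun z => ‖z‖ ^ 2 * ‖φ z‖) (𝓝[≠] (0:ℂ)) (𝓝 0)) :
    ∃ g : ℂ → ℂ, DifferentiableOn ℂ g {z : ℂ | ‖z‖ < 1} ∧
      ∀ z : ℂ, z ≠ 0 → ‖z‖ < 1 → g z = z * φ z := by
  set U : Set ℂ := {z : ℂ | ‖z‖ < 1 ∧ z ≠ 0} with hUdef
  set f : ℂ → ℂ := fun z => z * φ z with hfdef
  have hU : U ∈ 𝓝[≠] (0:ℂ) := by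
    have h1 : {z : ℂ | ‖z‖ < 1} ∈ 𝓝 (0:ℂ) := by
      have := Metric.ball_mem_nhds (0:ℂ) one_pos
      refine Filter.mem_of_superset this fun w hw => ?_
      simpa [Complex.dist_eq] using hw
    have h2 : {z : ℂ | ‖z‖ < 1} ∩ {(0:ℂ)}ᶜ ∈ 𝓝[≠] (0:ℂ) :=
      inter_mem (mem_nhdsWithin_of_mem_nhds h1) self_mem_nhdsWithin
    refine Filter.mem_of_superset h2 fun w hw => ⟨hw.1, hw.2⟩
  have hdf : DifferentiableOn ℂ f U := differentiableOn_id.mul hφ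
  have ho : (fun z => f z - f 0) =o[𝓝[≠] (0:ℂ)] fun z => (z - 0)⁻¹ := by
    have hf0 : f 0 = 0 := by simp [hfdef]
    simp only [hf0, sub_zero]
    rw [Asymptotics.isLittleO_iff]
    intro c hc
    filter_upwards [h.eventually (eventually_le_nhds hc), self_mem_nhdsWithin] with z hz hz0
    have habs0 : 0 < ‖z‖ := by simpa [norm_pos_iff] using hz0
    rw [hfdef]
    simp only [norm_mul, norm_inv]
    calc ‖z‖ * ‖φ z‖
        = ‖z‖ ^ 2 * ‖φ z‖ * (‖z‖)⁻¹ := by field_simp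
      _ ≤ c * (‖z‖)⁻¹ := by gcongr
  have hdiff := Complex.differentiableOn_update_limUnder_insert_of_isLittleO hU hdf ho
  refine ⟨Function.update f 0 (limUnder (𝓝[≠] (0:ℂ)) f), ?_, ?_⟩
  · have hins : insert (0:ℂ) U = {z : ℂ | ‖z‖ < 1} := by
      ext w
      simp only [mem_insert_iff, hUdef, mem_setOf_eq]
      constructor
      · rintro (rfl | hw)
        · simp
        · exact hw.1
      · intro hw
        by_cases h0 : w = 0
        · exact Or.inl h0
        · exact Or.inr ⟨hw, h0⟩
    rwa [hins] at hdiff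
  · intro z hz0 _
    rw [Function.update_of_ne hz0]

theorem bound_of_extension {φ g : ℂ → ℂ}
    (hg : DifferentiableOn ℂ g {z : ℂ | ‖z‖ < 1})
    (hgφ : ∀ z : ℂ, z ≠ 0 → ‖z‖ < 1 → g z = z * φ z) :
    ∃ C : ℝ, ∀ z : ℂ, z ≠ 0 → ‖z‖ < 1 / 2 →
      ‖φ z‖ * ‖z‖ ^ 2 * Real.log (‖z‖) ^ 2 ≤ C := by
  have hsub : closedBall (0:ℂ) (1/2) ⊆ {z : ℂ | ‖z‖ < 1} := by
    intro w hw
    rw [mem_closedBall, Complex.dist_eq, sub_zero] at hw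
    show ‖w‖ < 1
    linarith
  obtain ⟨M, hM⟩ := (isCompact_closedBall (0:ℂ) (1/2)).exists_bound_of_continuousOn
    (hg.continuousOn.mono hsub)
  have hM0 : 0 ≤ M := le_trans (norm_nonneg _) (hM 0 (mem_closedBall_self (by norm_num)))
  refine ⟨4 * M, ?_⟩
  intro z hz0 hz2
  have habs0 : 0 < ‖z‖ := by simpa [norm_pos_iff] using hz0
  set t : ℝ := ‖z‖ with htdef
  have htlog : t * Real.log t ^ 2 ≤ 4 := by
    have hti : (0:ℝ) < t⁻¹ := by positivity
    have h1 : Real.log t ^ 2 = Real.log t⁻¹ ^ 2 := by rw [Real.log_inv, neg_sq]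
    have h2 : 0 ≤ Real.log t⁻¹ := Real.log_nonneg (by rw [le_inv_comm₀ one_pos habs0]; linarith)
    have h3 : Real.log t⁻¹ ≤ 2 * Real.sqrt t⁻¹ := by
      have hs : Real.log t⁻¹ = 2 * Real.log (Real.sqrt t⁻¹) := by
        rw [Real.log_sqrt hti.le]; ring
      have h4 : Real.log (Real.sqrt t⁻¹) ≤ Real.sqrt t⁻¹ - 1 :=
        Real.log_le_sub_one_of_pos (Real.sqrt_pos.mpr hti)
      rw [hs]; linarith
    have h5 : Real.log t⁻¹ ^ 2 ≤ (2 * Real.sqrt t⁻¹) ^ 2 := by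
      apply pow_le_pow_left₀ h2 h3
    have h6 : (2 * Real.sqrt t⁻¹) ^ 2 = 4 * t⁻¹ := by
      rw [mul_pow, Real.sq_sqrt hti.le]; ring
    rw [h1]
    calc t * Real.log t⁻¹ ^ 2 ≤ t * (4 * t⁻¹) := by
          apply mul_le_mul_of_nonneg_left _ habs0.le
          rw [← h6]; exact h5
      _ = 4 := by field_simp
  have hgz : ‖g z‖ = t * ‖φ z‖ := by
    rw [hgφ z hz0 (by linarith), norm_mul]
  have hgM : ‖g z‖ ≤ M := hM z (by rw [mem_closedBall, Complex.dist_eq, sub_zero]; linarith)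
  calc ‖φ z‖ * ‖z‖ ^ 2 * Real.log (‖z‖) ^ 2
      = ‖g z‖ * (t * Real.log t ^ 2) := by rw [hgz]; ring
    _ ≤ M * 4 := by
        apply mul_le_mul hgM htlog (by positivity) hM0
    _ = 4 * M := by ring

theorem integrable_of_extension {φ g : ℂ → ℂ}
    (hφ : DifferentiableOn ℂ φ {z : ℂ | ‖z‖ < 1 ∧ z ≠ 0})
    (hg : DifferentiableOn ℂ g {z : ℂ | ‖z‖ < 1})
    (hgφ : ∀ z : ℂ, z ≠ 0 → ‖z‖ < 1 → g z = z * φ z) :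
    IntegrableOn φ {z : ℂ | ‖z‖ < 1 / 2 ∧ z ≠ 0} := by
  set S : Set ℂ := {z : ℂ | ‖z‖ < 1 / 2 ∧ z ≠ 0} with hSdef
  have hSm : MeasurableSet S := by
    have : S = ((fun z : ℂ => ‖z‖) ⁻¹' Iio (1/2)) ∩ {(0:ℂ)}ᶜ := by ext w; simp [hSdef, and_comm]
    rw [this]
    exact ((isOpen_Iio.preimage continuous_norm).inter
      isOpen_compl_singleton).measurableSet
  have hSU : S ⊆ {z : ℂ | ‖z‖ < 1 ∧ z ≠ 0} := by
    intro w hw; exact ⟨by linarith [hw.1], hw.2⟩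
  -- bound on the closed ball
  have hsub : closedBall (0:ℂ) (1/2) ⊆ {z : ℂ | ‖z‖ < 1} := by
    intro w hw
    rw [mem_closedBall, Complex.dist_eq, sub_zero] at hw
    show ‖w‖ < 1
    linarith
  obtain ⟨M, hM⟩ := (isCompact_closedBall (0:ℂ) (1/2)).exists_bound_of_continuousOn
    (hg.continuousOn.mono hsub)
  constructor
  · exact (hφ.continuousOn.mono hSU).aestronglyMeasurable hSm
  · rw [hasFiniteIntegral_iff_norm]
    have hbound : ∀ z ∈ S, ENNReal.ofReal ‖φ z‖
        ≤ ENNReal.ofReal M * ENNReal.ofReal (‖z‖)⁻¹ := by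
      intro z hz
      have habs0 : 0 < ‖z‖ := by simpa [norm_pos_iff] using hz.2
      have h1 : ‖φ z‖ = ‖g z‖ * (‖z‖)⁻¹ := by
        rw [hgφ z hz.2 (by linarith [hz.1]), norm_mul]
        field_simp
      have h2 : ‖g z‖ ≤ M := by
        refine hM z ?_
        rw [mem_closedBall, Complex.dist_eq, sub_zero]
        linarith [hz.1]
      rw [h1, ← ENNReal.ofReal_mul (le_trans (norm_nonneg _) h2)]
      apply ENNReal.ofReal_le_ofReal
      apply mul_le_mul_of_nonneg_right h2 (by positivity)
    calc ∫⁻ z in S, ENNReal.ofReal ‖φ z‖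
        ≤ ∫⁻ z in S, ENNReal.ofReal M * ENNReal.ofReal (‖z‖)⁻¹ := by
          refine setLIntegral_mono' hSm hbound
      _ = ENNReal.ofReal M * ∫⁻ z in S, ENNReal.ofReal (‖z‖)⁻¹ :=
          lintegral_const_mul' _ _ ENNReal.ofReal_ne_top
      _ < ⊤ := by
          refine ENNReal.mul_lt_top ENNReal.ofReal_lt_top ?_
          -- compute the lintegral via polar coordinates
          have hind : ∫⁻ z in S, ENNReal.ofReal (‖z‖)⁻¹
              = ∫⁻ z, S.indicator (fun z => ENNReal.ofReal (‖z‖)⁻¹) z := by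
            rw [lintegral_indicator hSm]
          rw [hind, ← lintegral_complex_polar]
          have hkey : ∀ p ∈ polarCoord.target,
              ENNReal.ofReal p.1 * S.indicator (fun z => ENNReal.ofReal (‖z‖)⁻¹)
                (Complex.polarCoord.symm p)
              = (Ioo (0:ℝ) (1/2) ×ˢ (univ : Set ℝ)).indicator 1 p := by
            intro p hp
            rw [polarCoord_target] at hp
            have hp1 : 0 < p.1 := hp.1
            have habs' : ‖Complex.polarCoord.symm p‖ = p.1 := by
              rw [Complex.norm_polarCoord_symm, abs_of_pos hp1]
            by_cases hmem : p.1 < 1/2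
            · have hin : Complex.polarCoord.symm p ∈ S := by
                refine ⟨by rw [habs']; exact hmem, ?_⟩
                intro h0
                rw [h0, norm_zero] at habs'
                exact ne_of_lt hp1 habs'
              rw [indicator_of_mem hin, indicator_of_mem (by exact ⟨⟨hp1, hmem⟩, trivial⟩),
                habs', ← ENNReal.ofReal_mul hp1.le, mul_inv_cancel₀ (ne_of_gt hp1)]
              simp
            · have hnotin : Complex.polarCoord.symm p ∉ S := by
                intro hin
                exact hmem (habs' ▸ hin.1)
              rw [indicator_of_notMem hnotin, indicator_of_notMem (by
                intro hmem'
                exact hmem hmem'.1.2)]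
              simp
          rw [setLIntegral_congr_fun polarCoord.open_target.measurableSet hkey]
          calc ∫⁻ p in polarCoord.target, (Ioo (0:ℝ) (1/2) ×ˢ (univ : Set ℝ)).indicator 1 p
              = volume (Ioo (0:ℝ) (1/2) ×ˢ (univ : Set ℝ) ∩ polarCoord.target) := by
                rw [lintegral_indicator (measurableSet_Ioo.prod MeasurableSet.univ),
                  Measure.restrict_restrict (measurableSet_Ioo.prod MeasurableSet.univ)]
                exact setLIntegral_one _
            _ ≤ volume (Ioo (0:ℝ) (1/2) ×ˢ Ioo (-π) π) := by
                apply measure_mono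
                rw [polarCoord_target]
                intro p hp
                exact ⟨hp.1.1, hp.2.2⟩
            _ < ⊤ := by
                rw [Measure.volume_eq_prod, Measure.prod_prod]
                exact ENNReal.mul_lt_top (by simp [Real.volume_Ioo]) (by simp [Real.volume_Ioo])

/-- For a holomorphic function `φ` on the punctured unit disc, the following are equivalent:
(i) `φ` is (Lebesgue-area) integrable on `{0 < |z| < 1/2}`;
(ii) `|φ(z)| |z|² (log|z|)²` is bounded on `{0 < |z| < 1/2}`;
(iii) `z φ(z)` extends holomorphically over `0`, i.e. `φ` has at worst a simple pole at `0`. -/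
theorem integrable_iff_bounded_iff_simple_pole (φ : ℂ → ℂ)
    (hφ : DifferentiableOn ℂ φ {z : ℂ | ‖z‖ < 1 ∧ z ≠ 0}) :
    (MeasureTheory.IntegrableOn φ {z : ℂ | ‖z‖ < 1 / 2 ∧ z ≠ 0} ↔
      ∃ C : ℝ, ∀ z : ℂ, z ≠ 0 → ‖z‖ < 1 / 2 →
        ‖φ z‖ * ‖z‖ ^ 2 * Real.log (‖z‖) ^ 2 ≤ C) ∧
    ((∃ C : ℝ, ∀ z : ℂ, z ≠ 0 → ‖z‖ < 1 / 2 →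
        ‖φ z‖ * ‖z‖ ^ 2 * Real.log (‖z‖) ^ 2 ≤ C) ↔
      ∃ g : ℂ → ℂ, DifferentiableOn ℂ g {z : ℂ | ‖z‖ < 1} ∧
        ∀ z : ℂ, z ≠ 0 → ‖z‖ < 1 → g z = z * φ z) := by
  constructor
  · constructor
    · intro hint
      obtain ⟨g, hg, hgφ⟩ := extend_of_tendsto hφ (tendsto_of_integrable hφ hint)
      exact bound_of_extension hg hgφ
    · rintro ⟨C, hC⟩
      obtain ⟨g, hg, hgφ⟩ := extend_of_tendsto hφ (tendsto_of_bound hC)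
      exact integrable_of_extension hφ hg hgφ
  · constructor
    · rintro ⟨C, hC⟩
      exact extend_of_tendsto hφ (tendsto_of_bound hC)
    · rintro ⟨g, hg, hgφ⟩
      exact bound_of_extension hg hgφ
end

section
/- Let R > 0 and let φ be a holomorphic function on the punctured disc {z ∈ ℂ : 0 < |z| < R} with ∫_{0 < |z| < R} |φ(z)| dA(z) < ∞ (dA the Lebesgue area measure). Then z²·φ(z) → 0 as z → 0; in particular φ has neither an essential singularity nor a pole of order ≥ 2 at 0, and z ↦ z·φ(z) extends to a holomorphic function on {|z| < R}. -/
open Real MeasureTheory Complex Filter Topology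
open Set Metric

lemma circle_mean_lower {f : ℂ → ℂ} {c : ℂ} {s : ℝ} (hs : 0 < s)
    (hf : DiffContOnCl ℂ f (ball c s)) :
    2 * π * ‖f c‖ ≤ ∫ θ in (0:ℝ)..(2*π), ‖f (circleMap c s θ)‖ := by
  have h := hf.circleIntegral_sub_inv_smul (w := c) (mem_ball_self hs)
  have h2 : ‖(2 * ↑π * I : ℂ) • f c‖ = 2 * π * ‖f c‖ := by
    rw [norm_smul]
    simp [abs_of_pos Real.pi_pos]
  have h3 : ‖∮ z in C(c, s), (z - c)⁻¹ • f z‖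
      ≤ ∫ θ in (0:ℝ)..(2*π), ‖f (circleMap c s θ)‖ := by
    rw [circleIntegral]
    refine (intervalIntegral.norm_integral_le_integral_norm (by positivity)).trans_eq ?_
    refine intervalIntegral.integral_congr fun θ _ => ?_
    rw [norm_smul, norm_smul, deriv_circleMap, circleMap_sub_center, norm_inv]
    have : ‖circleMap 0 s θ * I‖ = s := by
      simp [abs_of_pos hs]
    have h0 : ‖circleMap 0 s θ‖ = s := by simp [abs_of_pos hs]
    rw [this, h0]
    field_simp
  calc 2 * π * ‖f c‖ = ‖(2 * ↑π * I : ℂ) • f c‖ := h2.symm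
    _ = ‖∮ z in C(c, s), (z - c)⁻¹ • f z‖ := by rw [h]
    _ ≤ _ := h3

lemma submean {f : ℂ → ℂ} {c : ℂ} {r : ℝ} (hr : 0 < r)
    (hf : DifferentiableOn ℂ f (closedBall c r)) :
    π * r ^ 2 * ‖f c‖ ≤ ∫ w in ball c r, ‖f w‖ := by
  have hcont : ContinuousOn f (closedBall c r) := hf.continuousOn
  -- translate
  have htrans : ∫ w in ball c r, ‖f w‖ = ∫ w in ball (0:ℂ) r, ‖f (c + w)‖ := by
    have hmp : MeasurePreserving (fun w : ℂ => c + w) volume volume :=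
      measurePreserving_add_left volume c
    have hemb : MeasurableEmbedding (fun w : ℂ => c + w) :=
      (Homeomorph.addLeft c).measurableEmbedding
    have hpre : (fun w : ℂ => c + w) ⁻¹' ball c r = ball (0:ℂ) r := by
      ext w
      simp [mem_ball, dist_eq_norm, add_sub_cancel_left]
    rw [← hmp.setIntegral_preimage_emb hemb (fun w => ‖f w‖) (ball c r), hpre]
  rw [htrans]
  -- indicator and polar coordinates
  set g : ℂ → ℝ := (ball (0:ℂ) r).indicator (fun w => ‖f (c + w)‖) with hg
  have hind : ∫ w in ball (0:ℂ) r, ‖f (c + w)‖ = ∫ w, g w :=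
    (integral_indicator measurableSet_ball).symm
  rw [hind, ← Complex.integral_comp_polarCoord_symm g]
  set T : Set (ℝ × ℝ) := Ioo (0:ℝ) r ×ˢ Ioo (-π) π with hT
  set u : ℝ × ℝ → ℝ := fun p => p.1 * ‖f (c + Complex.polarCoord.symm p)‖ with hu
  have hstep : ∫ p in polarCoord.target, p.1 • g (Complex.polarCoord.symm p)
      = ∫ p in T, u p := by
    classical
    have heq : ∀ p : ℝ × ℝ, p.1 • g (Complex.polarCoord.symm p)
        = ({p : ℝ × ℝ | |p.1| < r}).indicator u p := by
      intro p
      have hmem : Complex.polarCoord.symm p ∈ ball (0:ℂ) r ↔ |p.1| < r := by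
        simp [mem_ball, dist_eq_norm, Complex.norm_polarCoord_symm]
      by_cases hp : |p.1| < r
      · rw [Set.indicator_apply, if_pos (by exact hp), hg, Set.indicator_apply,
          if_pos (hmem.2 hp)]
        rfl
      · rw [Set.indicator_apply, if_neg (by exact hp), hg, Set.indicator_apply,
          if_neg (fun h => hp (hmem.1 h)), smul_zero]
    rw [setIntegral_congr_fun (polarCoord.open_target.measurableSet) (fun p _ => heq p)]
    rw [setIntegral_indicator]
    · congr 1
      show volume.restrict ((Ioi (0:ℝ) ×ˢ Ioo (-π) π) ∩ {p : ℝ × ℝ | |p.1| < r}) = _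
      congr 1
      ext p
      simp only [mem_inter_iff, mem_setOf_eq, mem_prod, mem_Ioi, mem_Ioo]
      constructor
      · rintro ⟨⟨h1, h2⟩, h3⟩
        exact ⟨⟨h1, by rwa [abs_of_pos h1] at h3⟩, h2⟩
      · rintro ⟨⟨h1, h2⟩, h3⟩
        exact ⟨⟨h1, h3⟩, by rwa [abs_of_pos h1]⟩
    · exact measurableSet_lt (measurable_fst.abs) measurable_const
  rw [hstep]
  have hsymm : Continuous fun p : ℝ × ℝ => c + Complex.polarCoord.symm p := by
    simp only [Complex.polarCoord_symm_apply]
    exact continuous_const.add ((Complex.continuous_ofReal.comp continuous_fst).mul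
      ((Complex.continuous_ofReal.comp (Real.continuous_cos.comp continuous_snd)).add
        ((Complex.continuous_ofReal.comp (Real.continuous_sin.comp continuous_snd)).mul
          continuous_const)))
  have hmaps : MapsTo (fun p : ℝ × ℝ => c + Complex.polarCoord.symm p)
      (Icc (0:ℝ) r ×ˢ Icc (-π) π) (closedBall c r) := by
    rintro ⟨s, θ⟩ ⟨hs, _⟩
    simp only [mem_closedBall, dist_eq_norm, add_sub_cancel_left,
      Complex.norm_polarCoord_symm]
    rw [_root_.abs_of_nonneg hs.1]
    exact hs.2
  have hcontu : ContinuousOn u (Icc (0:ℝ) r ×ˢ Icc (-π) π) :=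
    (continuous_fst.continuousOn).mul ((hcont.comp hsymm.continuousOn hmaps).norm)
  have hK : IsCompact (Icc (0:ℝ) r ×ˢ Icc (-π) π) := isCompact_Icc.prod isCompact_Icc
  have hUK : IntegrableOn u (Icc (0:ℝ) r ×ˢ Icc (-π) π) := hcontu.integrableOn_compact hK
  have hTsub : T ⊆ Icc (0:ℝ) r ×ˢ Icc (-π) π :=
    prod_mono Ioo_subset_Icc_self Ioo_subset_Icc_self
  have hU : IntegrableOn u T := hUK.mono_set hTsub
  have hU2 : Integrable u (((volume : Measure ℝ).restrict (Ioo (0:ℝ) r)).prod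
      ((volume : Measure ℝ).restrict (Ioo (-π) π))) := by
    rwa [Measure.prod_restrict, ← Measure.volume_eq_prod]
  have hfub : ∫ p in T, u p = ∫ s in Ioo (0:ℝ) r, ∫ θ in Ioo (-π) π, u (s, θ) := by
    rw [hT, Measure.volume_eq_prod]
    exact setIntegral_prod u (by rw [IntegrableOn, ← Measure.prod_restrict]; exact hU2)
  rw [hfub]
  have hinner : ∀ s ∈ Ioo (0:ℝ) r,
      2 * π * ‖f c‖ * s ≤ ∫ θ in Ioo (-π) π, u (s, θ) := by
    rintro s ⟨hs0, hsr⟩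
    have hcm : ∀ θ : ℝ, c + Complex.polarCoord.symm (s, θ) = circleMap c s θ := by
      intro θ
      simp only [Complex.polarCoord_symm_apply, circleMap, Complex.exp_mul_I]
      push_cast
      ring
    have hdc : DiffContOnCl ℂ f (ball c s) :=
      ⟨hf.mono (ball_subset_closedBall.trans (closedBall_subset_closedBall hsr.le)),
        hcont.mono (closure_ball_subset_closedBall.trans
          (closedBall_subset_closedBall hsr.le))⟩
    have hcirc := circle_mean_lower hs0 hdc
    have hper : Function.Periodic (fun θ : ℝ => ‖f (circleMap c s θ)‖) (2 * π) :=
      (periodic_circleMap c s).comp fun z => ‖f z‖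
    have hshift : ∫ θ in (-π)..π, ‖f (circleMap c s θ)‖
        = ∫ θ in (0:ℝ)..(2*π), ‖f (circleMap c s θ)‖ := by
      have := hper.intervalIntegral_add_eq (-π) 0
      simpa [two_mul, neg_add_cancel_left] using this
    have heqint : ∫ θ in Ioo (-π) π, u (s, θ)
        = s * ∫ θ in (0:ℝ)..(2*π), ‖f (circleMap c s θ)‖ := by
      have : ∀ θ : ℝ, u (s, θ) = s * ‖f (circleMap c s θ)‖ := by
        intro θ
        rw [hu]
        simp only [hcm θ]
      simp_rw [this]
      rw [MeasureTheory.integral_const_mul, ← MeasureTheory.integral_Ioc_eq_integral_Ioo,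
        ← intervalIntegral.integral_of_le (by linarith [Real.pi_pos] : -π ≤ π), hshift]
    rw [heqint]
    have := mul_le_mul_of_nonneg_left hcirc hs0.le
    calc 2 * π * ‖f c‖ * s = s * (2 * π * ‖f c‖) := by ring
      _ ≤ _ := this
  have hlhs : ∫ s in Ioo (0:ℝ) r, (2 * π * ‖f c‖ * s) = π * r ^ 2 * ‖f c‖ := by
    rw [← MeasureTheory.integral_Ioc_eq_integral_Ioo,
      ← intervalIntegral.integral_of_le hr.le]
    rw [intervalIntegral.integral_const_mul, integral_id]
    ring
  have hmono : ∫ s in Ioo (0:ℝ) r, (2 * π * ‖f c‖ * s)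
      ≤ ∫ s in Ioo (0:ℝ) r, ∫ θ in Ioo (-π) π, u (s, θ) := by
    refine setIntegral_mono_on ?_ ?_ measurableSet_Ioo hinner
    · exact (((continuous_const.mul continuous_id).continuousOn).integrableOn_compact
        isCompact_Icc).mono_set Ioo_subset_Icc_self
    · exact hU2.integral_prod_left
  linarith [hlhs ▸ hmono]

/-- If `φ` is holomorphic on the punctured disc `{0 < |z| < R}` and `L¹` with respect to
Lebesgue area measure, then `z²φ(z) → 0` as `z → 0`; in particular `φ` has neither an
essential singularity nor a pole of order `≥ 2` at `0`, and `z φ(z)` extends holomorphically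
over `0`. -/
theorem integrable_implies_simple_pole (R : ℝ) (hR : 0 < R) (φ : ℂ → ℂ)
    (hφ : DifferentiableOn ℂ φ {z : ℂ | ‖z‖ < R ∧ z ≠ 0})
    (hint : MeasureTheory.IntegrableOn φ {z : ℂ | ‖z‖ < R ∧ z ≠ 0}) :
    Filter.Tendsto (fun z : ℂ => z ^ 2 * φ z) (𝓝[≠] (0 : ℂ)) (𝓝 0) ∧
    ∃ g : ℂ → ℂ, DifferentiableOn ℂ g {z : ℂ | ‖z‖ < R} ∧
      ∀ z : ℂ, z ≠ 0 → ‖z‖ < R → g z = z * φ z := by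
  set S : Set ℂ := {z : ℂ | ‖z‖ < R ∧ z ≠ 0} with hS
  have hSopen : IsOpen S := by
    have h1 : IsOpen {z : ℂ | ‖z‖ < R} :=
      isOpen_lt (by continuity) continuous_const
    have h2 : IsOpen {z : ℂ | z ≠ 0} := isOpen_ne
    exact h1.inter h2
  have hSmeas : MeasurableSet S := hSopen.measurableSet
  -- shrinking integrals
  set B : ℕ → Set ℂ := fun n => S ∩ closedBall 0 (R / (n + 2)) with hB
  have hBmeas : ∀ n, MeasurableSet (B n) := fun n =>
    hSmeas.inter measurableSet_closedBall
  have hBanti : Antitone B := by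
    intro m n hmn
    refine inter_subset_inter_right _ (closedBall_subset_closedBall ?_)
    have hc : (m:ℝ) + 2 ≤ (n:ℝ) + 2 := by
      have := (Nat.cast_le (α := ℝ)).2 hmn
      linarith
    exact div_le_div_of_nonneg_left hR.le (by positivity) hc
  have hBint : IntegrableOn (fun z => ‖φ z‖) (B 0) := by
    exact MeasureTheory.IntegrableOn.mono_set hint.norm inter_subset_left
  have hBempty : ⋂ n, B n = ∅ := by
    rw [eq_empty_iff_forall_notMem]
    intro z hz
    simp only [mem_iInter] at hz
    have hz0 : z ≠ 0 := (hz 0).1.2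
    have habs : ∀ n : ℕ, ‖z‖ ≤ R / (n + 2) := by
      intro n
      have := (hz n).2
      simpa [mem_closedBall, Complex.dist_eq] using this
    have : Tendsto (fun n : ℕ => R / (n + 2)) atTop (𝓝 0) := by
      apply Tendsto.div_atTop (g := fun n : ℕ => (n : ℝ) + 2) tendsto_const_nhds
      exact tendsto_atTop_add_const_right _ 2 tendsto_natCast_atTop_atTop
    have hle : ‖z‖ ≤ 0 := le_of_tendsto_of_tendsto' tendsto_const_nhds this habs
    exact hz0 (by simpa using le_antisymm hle (norm_nonneg z))
  have hBtend : Tendsto (fun n => ∫ z in B n, ‖φ z‖) atTop (𝓝 0) := by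
    have := tendsto_setIntegral_of_antitone hBmeas hBanti ⟨0, hBint⟩
    rwa [hBempty, Measure.restrict_empty, integral_zero_measure] at this
  -- Part 1 : the limit
  have htend : Tendsto (fun z : ℂ => z ^ 2 * φ z) (𝓝[≠] (0 : ℂ)) (𝓝 0) := by
    rw [Metric.tendsto_nhdsWithin_nhds]
    intro ε hε
    obtain ⟨n, hn⟩ := (Metric.tendsto_atTop.1 hBtend) (π / 8 * ε) (by positivity)
    have hn' : |∫ z in B n, ‖φ z‖| < π / 8 * ε := by
      simpa [Real.dist_eq] using hn n le_rfl
    set δ : ℝ := min (R / 2) (2 / 3 * (R / (n + 2))) with hδ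
    refine ⟨δ, by positivity, fun {z} hz hdz => ?_⟩
    have hz0 : z ≠ 0 := hz
    have hzabs : ‖z‖ < δ := by simpa [Complex.dist_eq] using hdz
    set r : ℝ := ‖z‖ / 2 with hrdef
    have hr : 0 < r := by
      have := norm_pos_iff.mpr hz0
      positivity
    have hδ1 : δ ≤ R / 2 := min_le_left _ _
    have hδ2 : δ ≤ 2 / 3 * (R / (n + 2)) := min_le_right _ _
    have hcb : closedBall z r ⊆ B n := by
      intro w hw
      simp only [mem_closedBall, Complex.dist_eq] at hw
      have h1 : ‖w‖ ≤ 3 / 2 * ‖z‖ := by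
        have h2 : ‖w‖ ≤ ‖z‖ + ‖w - z‖ := by
          simpa using norm_add_le z (w - z)
        rw [hrdef] at hw
        linarith
      have h0 : ‖z‖ ≤ ‖w‖ + ‖w - z‖ := by
        have h2 : ‖z‖ ≤ ‖w‖ + ‖z - w‖ := by
          simpa using norm_add_le w (z - w)
        rwa [norm_sub_rev z w] at h2
      have hwne : w ≠ 0 := by
        intro hw0
        rw [hw0, zero_sub, norm_neg] at hw
        rw [hrdef] at hw
        have := norm_pos_iff.mpr hz0
        linarith
      refine ⟨⟨?_, hwne⟩, ?_⟩
      · calc ‖w‖ ≤ 3 / 2 * ‖z‖ := h1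
          _ < 3 / 2 * δ := by
              have := norm_nonneg z
              nlinarith
          _ ≤ 3 / 2 * (R / 2) := by linarith
          _ < R := by linarith
      · simp only [mem_closedBall, Complex.dist_eq, sub_zero]
        calc ‖w‖ ≤ 3 / 2 * ‖z‖ := h1
          _ ≤ 3 / 2 * δ := by nlinarith [norm_nonneg z]
          _ ≤ 3 / 2 * (2 / 3 * (R / (n + 2))) := by linarith
          _ = R / (n + 2) := by ring
    have hsub : π * r ^ 2 * ‖φ z‖ ≤ ∫ w in ball z r, ‖φ w‖ :=
      submean hr (hφ.mono (fun w hw => hcb hw |>.1))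
    have hBint' : IntegrableOn (fun w => ‖φ w‖) (B n) :=
      MeasureTheory.IntegrableOn.mono_set hint.norm inter_subset_left
    have hmono2 : ∫ w in ball z r, ‖φ w‖ ≤ ∫ w in B n, ‖φ w‖ :=
      setIntegral_mono_set hBint' (ae_of_all _ fun w => norm_nonneg _)
        (HasSubset.Subset.eventuallyLE (ball_subset_closedBall.trans hcb))
    have hint2 : ∫ w in ball z r, ‖φ w‖ < π / 8 * ε :=
      lt_of_le_of_lt hmono2 (lt_of_le_of_lt (le_abs_self _) hn')
    have hchain : π * r ^ 2 * ‖φ z‖ < π / 8 * ε := hsub.trans_lt hint2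
    rw [dist_zero_right]
    have hnormeq : ‖z ^ 2 * φ z‖ = (2 * r) ^ 2 * ‖φ z‖ := by
      rw [norm_mul, norm_pow]
      congr 2
      rw [hrdef]
      ring
    rw [hnormeq]
    have hφnn : 0 ≤ ‖φ z‖ := norm_nonneg _
    have h8 : r ^ 2 * ‖φ z‖ < ε / 8 := by
      have hmm : π * (r ^ 2 * ‖φ z‖) < π * (ε / 8) := by nlinarith
      exact lt_of_mul_lt_mul_left hmm Real.pi_pos.le
    calc (2 * r) ^ 2 * ‖φ z‖ = 4 * (r ^ 2 * ‖φ z‖) := by ring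
      _ < 4 * (ε / 8) := by linarith
      _ < ε := by linarith
  refine ⟨htend, ?_⟩
  -- Part 2 : the extension
  have hball : {z : ℂ | ‖z‖ < R} = ball (0:ℂ) R := by
    ext z; simp [mem_ball, Complex.dist_eq]
  set F : ℂ → ℂ := Function.update (fun z : ℂ => z ^ 2 * φ z) 0
    (limUnder (𝓝[≠] (0:ℂ)) (fun z : ℂ => z ^ 2 * φ z)) with hF
  have hlim : limUnder (𝓝[≠] (0:ℂ)) (fun z : ℂ => z ^ 2 * φ z) = 0 :=
    htend.limUnder_eq
  have hd : DifferentiableOn ℂ (fun z : ℂ => z ^ 2 * φ z) (ball (0:ℂ) R \ {0}) := by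
    refine ((differentiable_id.pow 2).differentiableOn).mul (hφ.mono ?_)
    rintro z ⟨hz1, hz2⟩
    refine ⟨by simpa [mem_ball, Complex.dist_eq] using hz1, hz2⟩
  have ho : (fun z : ℂ => z ^ 2 * φ z - (0:ℂ) ^ 2 * φ 0) =o[𝓝[≠] (0:ℂ)]
      fun z : ℂ => (z - 0)⁻¹ := by
    simp only [ne_eq, zero_pow, mul_zero, sub_zero, OfNat.ofNat_ne_zero,
      not_false_eq_true, zero_mul]
    have h1 : (fun z : ℂ => z ^ 2 * φ z) =o[𝓝[≠] (0:ℂ)] (fun _ : ℂ => (1:ℂ)) :=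
      (Asymptotics.isLittleO_one_iff ℂ).2 htend
    refine h1.trans_isBigO (Asymptotics.IsBigO.of_bound 1 ?_)
    have hb : ball (0:ℂ) 1 ∈ 𝓝[≠] (0:ℂ) :=
      nhdsWithin_le_nhds (ball_mem_nhds _ one_pos)
    filter_upwards [hb, self_mem_nhdsWithin] with z hz hz0
    rw [norm_one, one_mul, norm_inv]
    rw [le_inv_comm₀]
    · have := mem_ball.1 hz
      rw [Complex.dist_eq, sub_zero] at this
      simpa using this.le
    · exact one_pos
    · exact norm_pos_iff.2 hz0
  have hFd : DifferentiableOn ℂ F (ball (0:ℂ) R) :=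
    Complex.differentiableOn_update_limUnder_of_isLittleO (ball_mem_nhds _ hR) hd ho
  refine ⟨dslope F 0, ?_, ?_⟩
  · rw [hball]
    exact (differentiableOn_dslope (ball_mem_nhds _ hR)).2 hFd
  · intro z hz hzR
    rw [dslope_of_ne F hz, slope_def_field]
    have hFz : F z = z ^ 2 * φ z := Function.update_of_ne hz _ _
    have hF0 : F 0 = 0 := by rw [hF, Function.update_self, hlim]
    rw [hFz, hF0]
    field_simp
    ring
end
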